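/- arXiv:2001.00618 — 6 statements merged into one kernel-verified Lean document; each statement's English description precedes it below -/
import Mathlib

section
/- Let K be a field of characteristic different from 2, and let v be a discrete valuation on K with value group ℤ whose residue field is nonreal (i.e., -1 is a sum of squares in the residue field). Then there exists an element a in K that is a nonzero sum of squares in K with v(a) = 1. -/
open Multiplicative

private lemma isSumSq_mul_sq' {R : Type*} [CommRing R] {s : R} (hs : IsSumSq s) (x : R) :
    IsSumSq (s * (x * x)) := by
  induction hs with
  | zero => simpa using IsSumSq.zero
  | @sq_add a S pS ih =>
      have h : (a * a + S) * (x * x) = (a * x) * (a * x) + S * (x * x) := by ring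
      rw [h]; exact IsSumSq.sq_add _ ih

private lemma lt_one_le_ofAdd_neg_one (g : WithZero (Multiplicative ℤ)) (h : g < 1) :
    g ≤ ((ofAdd (-1 : ℤ) : Multiplicative ℤ) : WithZero (Multiplicative ℤ)) := by
  induction g using WithZero.recZeroCoe with
  | zero => exact zero_le'
  | coe a =>
      rw [WithZero.coe_lt_one] at h
      rw [WithZero.coe_le_coe]
      have := Multiplicative.toAdd_lt.mpr h
      rw [show a = ofAdd (toAdd a) from rfl]
      rw [Multiplicative.ofAdd_le]
      simp only [toAdd_one] at this
      omega

private lemma lift_sumsq {K : Type} [Field K] (v : Valuation K (WithZero (Multiplicative ℤ)))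
    (y : IsLocalRing.ResidueField v.valuationSubring) (hy : IsSumSq y) :
    ∃ A : v.valuationSubring, IsSumSq (A : K) ∧
      IsLocalRing.residue (v.valuationSubring : Type) A = y := by
  induction hy with
  | zero => exact ⟨0, by simpa using IsSumSq.zero, map_zero _⟩
  | @sq_add a S pS ih =>
      obtain ⟨B, hB, hBr⟩ := ih
      obtain ⟨α, hα⟩ := IsLocalRing.residue_surjective (R := v.valuationSubring) a
      refine ⟨α * α + B, ?_, ?_⟩
      · push_cast
        exact IsSumSq.sq_add _ hB
      · rw [map_add, map_mul, hα, hBr]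

/-- If `K` is a field of characteristic ≠ 2 and `v` is a discrete valuation on `K`
with value group `ℤ` (i.e. surjective onto `ℤₘ₀`) whose residue field is nonreal, then there is
a nonzero sum of squares `a` in `K` with `v a = 1` (i.e. `a` is a uniformizer, written
multiplicatively as `v a = ofAdd (-1)`). -/
theorem stmt_0 (K : Type) [Field K] (hchar : ringChar K ≠ 2)
    (v : Valuation K (WithZero (Multiplicative ℤ))) (hsurj : Function.Surjective v)
    (hres : IsSumSq (-1 : IsLocalRing.ResidueField v.valuationSubring)) :
    ∃ a : K, IsSumSq a ∧ a ≠ 0 ∧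
      v a = ((Multiplicative.ofAdd (-1 : ℤ) : Multiplicative ℤ) :
        WithZero (Multiplicative ℤ)) := by
  classical
  set γ1 : WithZero (Multiplicative ℤ) := ((ofAdd (-1 : ℤ) : Multiplicative ℤ) :
    WithZero (Multiplicative ℤ)) with hγ1
  set γ2 : WithZero (Multiplicative ℤ) := ((ofAdd (-2 : ℤ) : Multiplicative ℤ) :
    WithZero (Multiplicative ℤ)) with hγ2
  have hγ11 : γ1 * γ1 = γ2 := by
    rw [hγ1, hγ2, ← WithZero.coe_mul, ← ofAdd_add]; norm_num
  have hγ1lt1 : γ1 < 1 := by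
    rw [hγ1, ← WithZero.coe_one, WithZero.coe_lt_coe, ← ofAdd_zero, Multiplicative.ofAdd_lt]
    norm_num
  have hγ2lt1 : γ2 < γ1 := by
    rw [hγ1, hγ2, WithZero.coe_lt_coe, Multiplicative.ofAdd_lt]; norm_num
  have h2 : (2 : K) ≠ 0 := Ring.two_ne_zero hchar
  obtain ⟨π, hπ⟩ := hsurj γ1
  have hπ0 : π ≠ 0 := by
    intro h
    rw [h, map_zero] at hπ
    exact (WithZero.coe_ne_zero (a := (ofAdd (-1 : ℤ) : Multiplicative ℤ))) hπ.symm
  have hπ1 : v (π - 1) = 1 := by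
    rw [Valuation.map_sub_eq_of_lt_right]
    · exact v.map_one
    · rw [v.map_one, hπ]; exact hγ1lt1
  have hv2le : v 2 ≤ 1 := by
    have h := v.map_add 1 1
    simpa [v.map_one] using (le_trans (by norm_num : v 2 ≤ v (1 + 1)) h)
  have hv2ne : v 2 ≠ 0 := by simpa using h2
  -- key claim: a sum of squares B with 1 + B = 0 or small valuation
  have key : ∃ B : K, IsSumSq B ∧
      (1 + B = 0 ∨ (1 + B ≠ 0 ∧ v (1 + B) ≤ γ2 * (v 2) ^ 2)) := by
    rcases lt_or_eq_of_le hv2le with hv2lt | hv2eq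
    · -- residue characteristic 2 : use 15 = 3² + 2² + 1² + 1², 1 + 15 = 2⁴
      have h16ne : (16 : K) ≠ 0 := by
        have : (16 : K) = 2 ^ 4 := by norm_num
        rw [this]; exact pow_ne_zero _ h2
      refine ⟨15, ?_, Or.inr ⟨by intro h; exact h16ne (by rw [← h]; norm_num), ?_⟩⟩
      · have h15 : (15 : K) = 3 * 3 + (2 * 2 + (1 * 1 + (1 * 1 + 0))) := by norm_num
        rw [h15]
        exact IsSumSq.sq_add _ (IsSumSq.sq_add _ (IsSumSq.sq_add _
          (IsSumSq.sq_add _ IsSumSq.zero)))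
      · have h16 : (1 : K) + 15 = 2 ^ 4 := by norm_num
        rw [h16, map_pow]
        have hle : v 2 ≤ γ1 := lt_one_le_ofAdd_neg_one _ hv2lt
        calc (v 2) ^ 4 = (v 2) ^ 2 * (v 2) ^ 2 := by
              rw [show (4 : ℕ) = 2 + 2 from rfl, pow_add]
          _ ≤ (γ1 * γ1) * (v 2) ^ 2 := by
              have : (v 2) ^ 2 ≤ γ1 * γ1 := by
                rw [pow_two]; exact mul_le_mul' hle hle
              exact mul_le_mul' this (le_refl _)
          _ = γ2 * (v 2) ^ 2 := by rw [hγ11]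
    · -- residue characteristic ≠ 2 : lift -1 from the residue field and bootstrap
      obtain ⟨A, hAs, hAr⟩ := lift_sumsq v _ hres
      have hresne : (-1 : IsLocalRing.ResidueField v.valuationSubring) ≠ 0 := by
        simp
      have hAunit : IsUnit A := by
        by_contra h
        have hmem : A ∈ IsLocalRing.maximalIdeal v.valuationSubring :=
          (IsLocalRing.mem_maximalIdeal A).mpr h
        exact hresne (hAr ▸ (IsLocalRing.residue_eq_zero_iff A).mpr hmem)
      have hA1 : v (A : K) = 1 := by
        obtain ⟨u, hu⟩ := hAunit
        have h1 : ((u.val : v.valuationSubring) : K) * ((u.inv : v.valuationSubring) : K)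
            = 1 := by
          rw [← Subring.coe_mul]
          norm_cast
          rw [u.val_inv]
        have hle1 : v ((u.val : v.valuationSubring) : K) ≤ 1 := u.val.2
        have hle2 : v ((u.inv : v.valuationSubring) : K) ≤ 1 := u.inv.2
        have hmul : v ((u.val : v.valuationSubring) : K) *
            v ((u.inv : v.valuationSubring) : K) = 1 := by
          rw [← v.map_mul, h1, v.map_one]
        have hge : 1 ≤ v ((u.val : v.valuationSubring) : K) := by
          calc (1 : WithZero (Multiplicative ℤ)) = _ * _ := hmul.symm
            _ ≤ v ((u.val : v.valuationSubring) : K) * 1 := by gcongr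
            _ = v ((u.val : v.valuationSubring) : K) := mul_one _
        have : v ((u.val : v.valuationSubring) : K) = 1 := le_antisymm hle1 hge
        rw [← hu]; exact this
      have hA0 : (A : K) ≠ 0 := by
        intro h
        rw [h, map_zero] at hA1
        exact zero_ne_one hA1
      set t : K := 1 + (A : K) with ht
      by_cases h0 : t = 0
      · exact ⟨(A : K), hAs, Or.inl h0⟩
      · have htle : v t ≤ 1 := by
          calc v t ≤ max (v 1) (v (A : K)) := v.map_add 1 (A : K)
            _ ≤ 1 := by rw [v.map_one, hA1]; exact le_refl _
        have htne1 : v t ≠ 1 := by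
          intro hvt
          -- then 1 + A would be a unit of the valuation subring, contradiction with residue 0
          have hmem : (1 + A : v.valuationSubring) ∈
              IsLocalRing.maximalIdeal v.valuationSubring := by
            rw [← IsLocalRing.residue_eq_zero_iff, map_add, map_one, hAr]
            ring
          have hnotunit : ¬ IsUnit (1 + A : v.valuationSubring) :=
            (IsLocalRing.mem_maximalIdeal _).mp hmem
          apply hnotunit
          have hinv : v t⁻¹ ≤ 1 := by
            rw [map_inv₀, hvt]; norm_num
          refine IsUnit.of_mul_eq_one ⟨t⁻¹, hinv⟩ ?_
          ext
          push_cast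
          rw [← ht]
          exact mul_inv_cancel₀ h0
        have htlt : v t < 1 := lt_of_le_of_ne htle htne1
        have htγ : v t ≤ γ1 := lt_one_le_ofAdd_neg_one _ htlt
        set c : K := -(t / (2 * (A : K))) with hc
        have h4 : (4 : K) ≠ 0 := by
          have : (4 : K) = 2 * 2 := by norm_num
          rw [this]; exact mul_ne_zero h2 h2
        have heq : 1 + (A : K) * ((1 + c) * (1 + c)) = t * t / (4 * (A : K)) := by
          rw [hc, ht]
          field_simp
          ring
        refine ⟨(A : K) * ((1 + c) * (1 + c)), isSumSq_mul_sq' hAs _, Or.inr ⟨?_, ?_⟩⟩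
        · rw [heq]
          exact div_ne_zero (mul_ne_zero h0 h0) (mul_ne_zero h4 hA0)
        · rw [heq, map_div₀, v.map_mul, v.map_mul]
          have h4v : v (4 : K) = 1 := by
            have : (4 : K) = 2 * 2 := by norm_num
            rw [this, v.map_mul, hv2eq, one_mul]
          rw [h4v, hA1, one_mul, div_one, hv2eq, one_pow, mul_one, ← hγ11]
          gcongr
  obtain ⟨B, hBs, hB⟩ := key
  set w : K := (π - 1) / 2 with hw
  set u : K := (π + 1) / 2 with hu
  refine ⟨u * u + B * (w * w), IsSumSq.sq_add _ (isSumSq_mul_sq' hBs w), ?_, ?_⟩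
  all_goals {
    have heq : u * u + B * (w * w) = π + (1 + B) * (w * w) := by
      rw [hu, hw]
      field_simp
      ring
    have hvw : v w * v 2 = 1 := by
      rw [← v.map_mul, hw, div_mul_cancel₀ _ h2, hπ1]
    have htail : v ((1 + B) * (w * w)) < v π := by
      rcases hB with h0 | ⟨hne, hle⟩
      · rw [h0, zero_mul, map_zero, hπ]
        exact WithZero.zero_lt_coe _
      · rw [v.map_mul, v.map_mul, hπ]
        calc v (1 + B) * (v w * v w) ≤ (γ2 * (v 2) ^ 2) * (v w * v w) := by gcongr
          _ = γ2 * ((v w * v 2) * (v w * v 2)) := by rw [pow_two]; ac_rfl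
          _ = γ2 := by rw [hvw]; simp
          _ < γ1 := hγ2lt1
    have hva : v (u * u + B * (w * w)) = γ1 := by
      rw [heq, Valuation.map_add_eq_of_lt_left _ htail, hπ]
    first
      | (intro hzero;
         rw [hzero, map_zero] at hva;
         exact (WithZero.coe_ne_zero (a := (ofAdd (-1 : ℤ) : Multiplicative ℤ))) hva.symm)
      | exact hva
  }
end

section
/- Let K be a field of characteristic different from 2, and let v₁,…,vₙ be finitely many distinct discrete valuations on K, each with value group ℤ and each with nonreal residue field. Then the group homomorphism τ from the multiplicative group of nonzero sums of squares of K to ℤⁿ given by σ ↦ (v₁(σ),…,vₙ(σ)) is surjective. -/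
namespace StmtOne

open Multiplicative

noncomputable section

abbrev G0 := WithZero (Multiplicative ℤ)

def oz (m : ℤ) : G0 := ((Multiplicative.ofAdd m : Multiplicative ℤ) : G0)

@[simp] lemma oz_ne_zero (m : ℤ) : oz m ≠ 0 := WithZero.coe_ne_zero

@[simp] lemma oz_mul (a b : ℤ) : oz a * oz b = oz (a + b) := by
  simp [oz, ← WithZero.coe_mul, ← ofAdd_add]

@[simp] lemma oz_le_oz {a b : ℤ} : oz a ≤ oz b ↔ a ≤ b := by
  simp [oz, WithZero.coe_le_coe]

@[simp] lemma oz_lt_oz {a b : ℤ} : oz a < oz b ↔ a < b := by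
  simp [oz, WithZero.coe_lt_coe]

@[simp] lemma oz_zero : oz 0 = 1 := rfl

@[simp] lemma oz_inv (a : ℤ) : (oz a)⁻¹ = oz (-a) := by
  simp [oz, ← WithZero.coe_inv]

@[simp] lemma oz_pow (a : ℤ) (m : ℕ) : (oz a) ^ m = oz (m * a) := by
  induction m with
  | zero => simp
  | succ k ih =>
      rw [pow_succ, ih, oz_mul]
      congr 1
      push_cast
      ring

lemma oz_le_one {a : ℤ} : oz a ≤ 1 ↔ a ≤ 0 := by
  rw [← oz_zero, oz_le_oz]

lemma one_lt_oz {a : ℤ} : 1 < oz a ↔ 0 < a := by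
  rw [← oz_zero, oz_lt_oz]

lemma oz_lt_one {a : ℤ} : oz a < 1 ↔ a < 0 := by
  rw [← oz_zero, oz_lt_oz]

lemma lt_oz_iff {g : G0} {a : ℤ} : g < oz a ↔ g = 0 ∨ ∃ b : ℤ, g = oz b ∧ b < a := by
  induction g using WithZero.recZeroCoe with
  | zero => simp [WithZero.zero_lt_coe, oz]
  | coe x =>
      constructor
      · intro h
        refine Or.inr ⟨x.toAdd, by simp [oz], ?_⟩
        have h1 : x < Multiplicative.ofAdd a := WithZero.coe_lt_coe.mp (by simpa [oz] using h)
        simpa using Multiplicative.toAdd_lt.mpr h1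
      · rintro (h | ⟨b, hb, hba⟩)
        · exact absurd h WithZero.coe_ne_zero
        · rw [hb]; exact oz_lt_oz.mpr hba

lemma le_oz_neg_one_of_lt_one {g : G0} (h : g < 1) : g ≤ oz (-1) := by
  rcases (by simpa [← oz_zero] using h : g < oz 0) with h0
  rcases lt_oz_iff.mp h0 with h1 | ⟨b, rfl, hb⟩
  · simp [h1]
  · exact oz_le_oz.mpr (by omega)

lemma exists_ozz {g : G0} (h : g ≠ 0) : ∃ a : ℤ, g = oz a := by
  induction g using WithZero.recZeroCoe with
  | zero => simp at h
  | coe x => exact ⟨x.toAdd, by simp [oz]⟩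

lemma oz_zpow (a b : ℤ) : (oz a) ^ b = oz (b * a) := by
  rcases b.eq_nat_or_neg with ⟨m, rfl | rfl⟩
  · rw [zpow_natCast, oz_pow]
  · rw [zpow_neg, zpow_natCast, oz_pow, oz_inv]
    congr 1
    push_cast
    ring

lemma one_le_of_inv_le_one' {a : G0} (h0 : a ≠ 0) (h : a⁻¹ ≤ 1) : 1 ≤ a := by
  obtain ⟨b, rfl⟩ := exists_ozz h0
  rw [oz_inv, oz_le_one] at h
  rw [← oz_zero, oz_le_oz]
  omega

lemma exists_oz {g : G0} (h : g ≠ 0) : ∃ a : ℤ, g = oz a := exists_ozz h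

variable {K : Type} [Field K]

lemma val_ne_zero (v : Valuation K G0) {x : K} (hx : x ≠ 0) : v x ≠ 0 :=
  (Valuation.ne_zero_iff v).mpr hx

def vexp (v : Valuation K G0) (x : K) : ℤ :=
  if h : v x = 0 then 0 else (exists_oz h).choose

lemma vexp_spec (v : Valuation K G0) {x : K} (hx : x ≠ 0) : v x = oz (vexp v x) := by
  have h : v x ≠ 0 := val_ne_zero v hx
  rw [vexp, dif_neg h]
  exact (exists_oz h).choose_spec

/-- From surjectivity, get a nonzero element with exact value. -/
lemma exists_val_eq (v : Valuation K G0) (hv : Function.Surjective v) (a : ℤ) :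
    ∃ x : K, x ≠ 0 ∧ v x = oz a := by
  obtain ⟨x, hx⟩ := hv (oz a)
  refine ⟨x, ?_, hx⟩
  intro h0
  rw [h0, map_zero] at hx
  exact (oz_ne_zero a) hx.symm

/-- Key dichotomy: for distinct surjective `ℤ`-valuations, the valuation rings are incomparable. -/
lemma exists_le_one_lt_one (v w : Valuation K G0) (hv : Function.Surjective v)
    (hw : Function.Surjective w) (hne : v ≠ w) :
    ∃ t : K, t ≠ 0 ∧ v t ≤ 1 ∧ 1 < w t := by
  by_contra hcon
  push_neg at hcon
  have hsub : ∀ t : K, v t ≤ 1 → w t ≤ 1 := by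
    intro t ht
    rcases eq_or_ne t 0 with rfl | ht0
    · simp
    · exact hcon t ht0 ht
  obtain ⟨π, hπ0, hπ⟩ := exists_val_eq v hv (-1)
  have hπle : v π ≤ 1 := by rw [hπ]; exact oz_le_one.mpr (by omega)
  have hwπ : w π ≤ 1 := hsub π hπle
  -- any ρ with w ρ < 1 satisfies v ρ < 1
  have hsmall : ∀ ρ : K, ρ ≠ 0 → w ρ < 1 → v ρ < 1 := by
    intro ρ hρ0 hwρ
    by_contra hv1
    push_neg at hv1
    have hinv : v ρ⁻¹ ≤ 1 := by
      rw [map_inv₀]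
      exact inv_le_one_of_one_le₀ hv1
    have : w ρ⁻¹ ≤ 1 := hsub _ hinv
    rw [map_inv₀] at this
    have h1 : 1 ≤ w ρ := one_le_of_inv_le_one' (val_ne_zero w hρ0) this
    exact absurd hwρ (not_lt.mpr h1)
  rcases lt_or_eq_of_le hwπ with hwπlt | hwπeq
  · -- w π < 1 : derive v = w
    apply hne
    -- first, w π = oz (-1)
    obtain ⟨ρ, hρ0, hρ⟩ := exists_val_eq w hw (-1)
    have hvρ : v ρ < 1 := hsmall ρ hρ0 (by rw [hρ]; exact oz_lt_one.mpr (by omega))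
    have hvρ' : v ρ ≤ oz (-1) := le_oz_neg_one_of_lt_one hvρ
    have hvρe := vexp_spec v hρ0
    have hbneg : vexp v ρ ≤ -1 := by
      rw [hvρe] at hvρ'
      exact oz_le_oz.mp hvρ'
    have hdiv : v (ρ / π) ≤ 1 := by
      rw [map_div₀, hπ, hvρe, div_eq_mul_inv, oz_inv, oz_mul, oz_le_one]
      omega
    have hwdiv : w (ρ / π) ≤ 1 := hsub _ hdiv
    rw [map_div₀, hρ] at hwdiv
    have hwπ1 : oz (-1) ≤ w π := by
      have hwπ0 : w π ≠ 0 := val_ne_zero w hπ0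
      exact (div_le_one₀ (lt_of_le_of_ne (zero_le') (Ne.symm hwπ0))).mp hwdiv
    have hwπv : w π = oz (-1) := le_antisymm (le_oz_neg_one_of_lt_one hwπlt) hwπ1
    -- now prove v = w
    ext x
    rcases eq_or_ne x 0 with rfl | hx0
    · simp
    · have hvx := vexp_spec v hx0
      have hu1 : v (x * π ^ (vexp v x)) = 1 := by
        rw [map_mul, map_zpow₀, hvx, hπ, oz_zpow, oz_mul]
        norm_num
      have hu2 : v (x * π ^ (vexp v x))⁻¹ = 1 := by rw [map_inv₀, hu1]; simp
      have hwu1 : w (x * π ^ (vexp v x)) ≤ 1 := hsub _ (le_of_eq hu1)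
      have hwu2 : w (x * π ^ (vexp v x))⁻¹ ≤ 1 := hsub _ (le_of_eq hu2)
      rw [map_inv₀] at hwu2
      have hwu : w (x * π ^ (vexp v x)) = 1 := by
        have h0 : w (x * π ^ (vexp v x)) ≠ 0 := by
          apply val_ne_zero
          exact mul_ne_zero hx0 (zpow_ne_zero _ hπ0)
        exact le_antisymm hwu1 (one_le_of_inv_le_one' h0 hwu2)
      have hthis : w x * w π ^ (vexp v x) = 1 := by rw [← map_zpow₀, ← map_mul]; exact hwu
      rw [hwπv, oz_zpow] at hthis
      have hwx : w x = (oz (vexp v x * -1))⁻¹ :=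
        eq_inv_of_mul_eq_one_left hthis
      rw [hvx, hwx, oz_inv]
      congr 1
      ring
  · -- w π = 1 : contradiction with surjectivity of w
    obtain ⟨ρ, hρ0, hρ⟩ := exists_val_eq w hw (-1)
    have hvρ : v ρ < 1 := hsmall ρ hρ0 (by rw [hρ]; exact oz_lt_one.mpr (by omega))
    have hvρ' : v ρ ≤ oz (-1) := le_oz_neg_one_of_lt_one hvρ
    -- m := -vexp v ρ ≥ 1 ; consider π^m / ρ
    have hvρe := vexp_spec v hρ0
    set b := vexp v ρ with hb
    have hbneg : b ≤ -1 := by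
      rw [hvρe] at hvρ'
      exact oz_le_oz.mp hvρ'
    have hvt : v (π ^ (-b).toNat / ρ) ≤ 1 := by
      rw [map_div₀, map_pow, hπ, hvρe, oz_pow]
      rw [div_eq_mul_inv, oz_inv, oz_mul, oz_le_one]
      omega
    have hwt : w (π ^ (-b).toNat / ρ) ≤ 1 := hsub _ hvt
    rw [map_div₀, map_pow, hwπeq, hρ] at hwt
    rw [one_pow, div_eq_mul_inv, one_mul, oz_inv] at hwt
    rw [oz_le_one] at hwt
    omega


lemma exists_big_small {n : ℕ} (v : Fin n → Valuation K G0) (hdist : Function.Injective v)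
    (hsurj : ∀ i, Function.Surjective (v i)) {i j : Fin n} (hij : i ≠ j) :
    ∃ x : K, x ≠ 0 ∧ 1 < v i x ∧ v j x < 1 := by
  obtain ⟨t, ht0, htj, hti⟩ := exists_le_one_lt_one (v j) (v i) (hsurj j) (hsurj i)
      (fun h => hij (hdist h).symm)
  obtain ⟨t', ht'0, ht'i, ht'j⟩ := exists_le_one_lt_one (v i) (v j) (hsurj i) (hsurj j)
      (fun h => hij (hdist h))
  refine ⟨t / t', div_ne_zero ht0 ht'0, ?_, ?_⟩
  · have e1 := vexp_spec (v i) ht0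
    have e2 := vexp_spec (v i) ht'0
    have p1 : 0 < vexp (v i) t := by rw [e1] at hti; exact one_lt_oz.mp hti
    have p2 : vexp (v i) t' ≤ 0 := by rw [e2] at ht'i; exact oz_le_one.mp ht'i
    rw [map_div₀, e1, e2, div_eq_mul_inv, oz_inv, oz_mul]
    exact one_lt_oz.mpr (by omega)
  · have e1 := vexp_spec (v j) ht0
    have e2 := vexp_spec (v j) ht'0
    have p1 : vexp (v j) t ≤ 0 := by rw [e1] at htj; exact oz_le_one.mp htj
    have p2 : 0 < vexp (v j) t' := by rw [e2] at ht'j; exact one_lt_oz.mp ht'j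
    rw [map_div₀, e1, e2, div_eq_mul_inv, oz_inv, oz_mul]
    exact oz_lt_one.mpr (by omega)

lemma AW1 {n : ℕ} (v : Fin n → Valuation K G0) (hdist : Function.Injective v)
    (hsurj : ∀ i, Function.Surjective (v i)) (i : Fin n) :
    ∃ z : K, z ≠ 0 ∧ 1 < v i z ∧ ∀ j, j ≠ i → v j z < 1 := by
  suffices h : ∀ S : Finset (Fin n), ∃ z : K, z ≠ 0 ∧ 1 < v i z ∧ ∀ j ∈ S, j ≠ i → v j z < 1 by
    obtain ⟨z, h0, h1, h2⟩ := h Finset.univ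
    exact ⟨z, h0, h1, fun j hj => h2 j (Finset.mem_univ j) hj⟩
  intro S
  induction S using Finset.induction_on with
  | empty =>
      obtain ⟨z, h0, hz⟩ := exists_val_eq (v i) (hsurj i) 1
      exact ⟨z, h0, by rw [hz]; exact one_lt_oz.mpr one_pos, by simp⟩
  | @insert a S ha ih =>
      obtain ⟨z, hz0, hzi, hzS⟩ := ih
      by_cases hai : a = i
      · refine ⟨z, hz0, hzi, fun j hj hji => ?_⟩
        rcases Finset.mem_insert.mp hj with rfl | hjS
        · exact absurd hai hji
        · exact hzS j hjS hji
      · obtain ⟨w, hw0, hwi, hwa⟩ :=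
          exists_big_small v hdist hsurj (i := i) (j := a) (fun h => hai h.symm)
        set r : ℕ := 1 + S.sup (fun j => (vexp (v j) w).natAbs) with hr
        have hr1 : 1 ≤ r := Nat.le_add_right 1 _
        have hkey : ∀ j ∈ S, j ≠ i → v j (z ^ r) * v j w < 1 := by
          intro j hj hji
          have ez := vexp_spec (v j) hz0
          have ew := vexp_spec (v j) hw0
          have hzj : vexp (v j) z ≤ -1 := by
            have := hzS j hj hji
            rw [ez] at this
            exact oz_le_oz.mp (le_oz_neg_one_of_lt_one this)
          have hb : (vexp (v j) w) ≤ ((vexp (v j) w).natAbs : ℤ) := Int.le_natAbs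
          have hb2 : ((vexp (v j) w).natAbs : ℤ) ≤ ((S.sup (fun j => (vexp (v j) w).natAbs) : ℕ) : ℤ) := by
            exact_mod_cast Finset.le_sup (f := fun j => (vexp (v j) w).natAbs) hj
          have hrz : (r : ℤ) = 1 + ((S.sup (fun j => (vexp (v j) w).natAbs) : ℕ) : ℤ) := by
            rw [hr]; push_cast; ring
          rw [map_pow, ez, ew, oz_pow, oz_mul]
          apply oz_lt_one.mpr
          have hrr : 1 ≤ (r:ℤ) := by exact_mod_cast hr1
          nlinarith [mul_le_mul_of_nonneg_left hzj (by omega : (0:ℤ) ≤ (r:ℤ))]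
        rcases lt_trichotomy (v a z) 1 with hlt | heq | hgt
        · refine ⟨z, hz0, hzi, fun j hj hji => ?_⟩
          rcases Finset.mem_insert.mp hj with rfl | hjS
          · exact hlt
          · exact hzS j hjS hji
        · refine ⟨z ^ r * w, mul_ne_zero (pow_ne_zero _ hz0) hw0, ?_, ?_⟩
          · have ez := vexp_spec (v i) hz0
            have ew := vexp_spec (v i) hw0
            have p1 : 0 < vexp (v i) z := by rw [ez] at hzi; exact one_lt_oz.mp hzi
            have p2 : 0 < vexp (v i) w := by rw [ew] at hwi; exact one_lt_oz.mp hwi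
            rw [map_mul, map_pow, ez, ew, oz_pow, oz_mul]
            apply one_lt_oz.mpr
            have hrr : 1 ≤ (r:ℤ) := by exact_mod_cast hr1
            nlinarith
          · intro j hj hji
            rcases Finset.mem_insert.mp hj with rfl | hjS
            · rw [map_mul, map_pow, heq, one_pow, one_mul]; exact hwa
            · have := hkey j hjS hji
              rw [map_mul, map_pow]
              rw [map_pow] at this
              exact this
        · -- v a z > 1 : use z^r/(1+z^r) * w
          have hy0 : v i (z ^ r) ≠ 0 := val_ne_zero _ (pow_ne_zero _ hz0)
          have hpowbig : ∀ k : Fin n, 1 < v k z → 1 < v k (z ^ r) := by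
            intro k hk
            have ez := vexp_spec (v k) hz0
            have p1 : 0 < vexp (v k) z := by rw [ez] at hk; exact one_lt_oz.mp hk
            rw [map_pow, ez, oz_pow]
            apply one_lt_oz.mpr
            have hrr : 1 ≤ (r:ℤ) := by exact_mod_cast hr1
            nlinarith
          have hyi : 1 < v i (z ^ r) := hpowbig i hzi
          have hya : 1 < v a (z ^ r) := hpowbig a hgt
          have h1y : 1 + z ^ r ≠ 0 := by
            intro h
            have : v i (1 + z ^ r) = v i (z ^ r) := Valuation.map_add_eq_of_lt_right _ (by simpa using hyi)
            rw [h, map_zero] at this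
            exact hy0 this.symm
          set q : K := z ^ r / (1 + z ^ r) with hq
          have hq0 : q ≠ 0 := div_ne_zero (pow_ne_zero _ hz0) h1y
          have hqbig : ∀ (k : Fin n), 1 < v k (z ^ r) → v k q = 1 := by
            intro k hk
            rw [hq, map_div₀, Valuation.map_add_eq_of_lt_right _ (by simpa using hk)]
            exact div_self (by intro h; rw [h] at hk; exact absurd hk (by simp))
          have hqsmall : ∀ (k : Fin n), v k (z ^ r) < 1 → v k q = v k (z ^ r) := by
            intro k hk
            rw [hq, map_div₀, Valuation.map_add_eq_of_lt_left _ (by simpa using hk), map_one, div_one]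
          refine ⟨q * w, mul_ne_zero hq0 hw0, ?_, ?_⟩
          · rw [map_mul, hqbig i hyi, one_mul]; exact hwi
          · intro j hj hji
            rcases Finset.mem_insert.mp hj with rfl | hjS
            · rw [map_mul, hqbig j hya, one_mul]; exact hwa
            · have hzj : v j (z ^ r) < 1 := by
                rw [map_pow]
                calc (v j z) ^ r ≤ (v j z) ^ 1 := by
                      apply pow_le_pow_right_of_le_one' (le_of_lt (hzS j hjS hji))
                      omega
                  _ = v j z := pow_one _
                  _ < 1 := hzS j hjS hji
              rw [map_mul, hqsmall j hzj]
              exact hkey j hjS hji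

lemma AW2 {n : ℕ} (v : Fin n → Valuation K G0) (hdist : Function.Injective v)
    (hsurj : ∀ i, Function.Surjective (v i)) (c : Fin n → ℤ) :
    ∃ x : K, x ≠ 0 ∧ ∀ j, v j x = oz (c j) := by
  rcases Nat.eq_zero_or_pos n with hn | hn
  · subst hn
    exact ⟨1, one_ne_zero, fun j => j.elim0⟩
  choose z hz0 hzi hzj using AW1 v hdist hsurj
  choose p hp0 hp using fun j => exists_val_eq (v j) (hsurj j) (c j)
  set f : Fin n × Fin n → ℕ := fun q => (vexp (v q.1) (p q.2) - c q.1).natAbs with hf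
  set m : ℕ := 1 + Finset.univ.sup f with hm
  have hm1 : 1 ≤ m := Nat.le_add_right 1 _
  set y : Fin n → K := fun i => ((z i)⁻¹) ^ m with hy
  have hy0 : ∀ i, y i ≠ 0 := fun i => pow_ne_zero _ (inv_ne_zero (hz0 i))
  -- main diagonal
  have hykk : ∀ k, v k (y k) < 1 := by
    intro k
    have ez := vexp_spec (v k) (hz0 k)
    have h1 : 0 < vexp (v k) (z k) := by
      have := hzi k; rw [ez] at this; exact one_lt_oz.mp this
    rw [hy]
    simp only [map_pow, map_inv₀]
    rw [ez, oz_inv, oz_pow]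
    apply oz_lt_one.mpr
    have : (1:ℤ) ≤ (m:ℤ) := by exact_mod_cast hm1
    nlinarith
  have hyki : ∀ k i, i ≠ k → 1 < v k (y i) ∧ oz ((m:ℤ)) ≤ v k (y i) := by
    intro k i hik
    have ez := vexp_spec (v k) (hz0 i)
    have h1 : vexp (v k) (z i) ≤ -1 := by
      have := hzj i k (fun h => hik h.symm)
      rw [ez] at this
      exact oz_le_oz.mp (le_oz_neg_one_of_lt_one this)
    have hmz : (1:ℤ) ≤ (m:ℤ) := by exact_mod_cast hm1
    constructor
    · rw [hy]; simp only [map_pow, map_inv₀]; rw [ez, oz_inv, oz_pow]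
      apply one_lt_oz.mpr; nlinarith
    · rw [hy]; simp only [map_pow, map_inv₀]; rw [ez, oz_inv, oz_pow]
      apply oz_le_oz.mpr; nlinarith
  set ζ : Fin n → K := fun i => (1 + y i)⁻¹ with hζ
  have hterm : ∀ k i, i ≠ k → v k (ζ i * p i) < oz (c k) := by
    intro k i hik
    obtain ⟨hbig, hle⟩ := hyki k i hik
    have h1y : v k (1 + y i) = v k (y i) := Valuation.map_add_eq_of_lt_right _ (by simpa using hbig)
    have ep := vexp_spec (v k) (hp0 i)
    have hbnd : vexp (v k) (p i) - c k ≤ ((Finset.univ.sup f : ℕ) : ℤ) := by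
      calc vexp (v k) (p i) - c k ≤ ((vexp (v k) (p i) - c k).natAbs : ℤ) := Int.le_natAbs
        _ ≤ _ := by exact_mod_cast Finset.le_sup (f := f) (Finset.mem_univ (k, i))
    have hml : (m : ℤ) = 1 + ((Finset.univ.sup f : ℕ) : ℤ) := by rw [hm]; push_cast; ring
    obtain ⟨b, hb⟩ := exists_oz (val_ne_zero (v k) (hy0 i))
    rw [map_mul, hζ]
    simp only [map_inv₀]
    rw [h1y, hb, ep, oz_inv, oz_mul]
    apply oz_lt_oz.mpr
    have hble : oz ((m:ℤ)) ≤ oz b := by rw [← hb]; exact hle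
    have := oz_le_oz.mp hble
    omega
  have hmain : ∀ k, v k (ζ k * p k) = oz (c k) := by
    intro k
    have h1y : v k (1 + y k) = 1 := by
      have := Valuation.map_add_eq_of_lt_left (v k) (y := y k) (x := 1) (by simpa using hykk k)
      simpa using this
    rw [map_mul, hζ]
    simp only [map_inv₀]
    rw [h1y, inv_one, one_mul]
    exact hp k
  have hval : ∀ k, v k (∑ i, ζ i * p i) = oz (c k) := by
    intro k
    rw [← Finset.add_sum_erase _ _ (Finset.mem_univ k)]
    have hrest : v k (∑ i ∈ Finset.univ.erase k, ζ i * p i) < oz (c k) :=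
      Valuation.map_sum_lt _ (oz_ne_zero _)
        (fun i hi => hterm k i (Finset.mem_erase.mp hi).1)
    rw [Valuation.map_add_eq_of_lt_left _ (by rw [hmain k]; exact hrest)]
    exact hmain k
  refine ⟨∑ i, ζ i * p i, ?_, hval⟩
  intro h0
  have hk := hval ⟨0, hn⟩
  rw [h0, map_zero] at hk
  exact (oz_ne_zero _) hk.symm



section SumSq
variable {A : Type*} [CommRing A]

lemma isSumSq_one' : IsSumSq (1 : A) := by
  have : (1:A) = 1*1 + 0 := by ring
  rw [this]; exact IsSumSq.sq_add _ IsSumSq.zero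

lemma isSumSq_sq' (a : A) : IsSumSq (a^2) := by
  have : a^2 = a*a + 0 := by ring
  rw [this]; exact IsSumSq.sq_add _ IsSumSq.zero

lemma isSumSq_sq_mul (b : A) {t : A} (ht : IsSumSq t) : IsSumSq (b * b * t) := by
  induction ht with
  | zero => rw [mul_zero]; exact IsSumSq.zero
  | @sq_add a S pS ih =>
      have : b * b * (a * a + S) = (b*a) * (b*a) + b * b * S := by ring
      rw [this]; exact IsSumSq.sq_add _ ih

lemma isSumSq_mul {s t : A} (hs : IsSumSq s) (ht : IsSumSq t) : IsSumSq (s * t) := by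
  induction hs with
  | zero => rw [zero_mul]; exact IsSumSq.zero
  | @sq_add a S pS ih =>
      have : (a * a + S) * t = a * a * t + S * t := by ring
      rw [this]; exact (isSumSq_sq_mul a ht).add ih

lemma isSumSq_head {t : A} (ht : IsSumSq t) (h0 : t ≠ 0) :
    ∃ a S : A, a ≠ 0 ∧ IsSumSq S ∧ t = a * a + S := by
  induction ht with
  | zero => exact absurd rfl h0
  | @sq_add a S pS ih =>
      by_cases ha : a = 0
      · subst ha
        rw [zero_mul, zero_add] at h0 ⊢
        exact ih h0
      · exact ⟨a, S, ha, pS, rfl⟩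

end SumSq

lemma allSumSq (h2 : (2:K) ≠ 0) (h : IsSumSq (-1:K)) (x : K) : IsSumSq x := by
  have hx : x = ((x+1)/2)^2 + (-1) * ((x-1)/2)^2 := by
    field_simp
    ring
  rw [hx]
  exact (isSumSq_sq' _).add (isSumSq_mul h (isSumSq_sq' _))

section Residue

variable (v : Valuation K G0)

local notation "O" => Valuation.valuationSubring v

lemma val_eq_one_of_residue_ne_zero {r : O} (h : IsLocalRing.residue O r ≠ 0) :
    v (r : K) = 1 := by
  have hmem : r ∉ IsLocalRing.maximalIdeal O := by
    intro hmem
    exact h (Ideal.Quotient.eq_zero_iff_mem.mpr hmem)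
  have hunit : IsUnit r := by
    by_contra hn
    exact hmem ((IsLocalRing.mem_maximalIdeal r).mpr hn)
  obtain ⟨u, hu⟩ := hunit
  have h1 : ((u : O) : K) * (((u⁻¹ : Oˣ) : O) : K) = 1 := by
    have hOO : ((u:O) * ((u⁻¹:Oˣ):O) : O) = 1 := by
      rw [← Units.val_mul, mul_inv_cancel u]
      rfl
    calc ((u:O):K) * (((u⁻¹:Oˣ):O):K) = (((u:O) * ((u⁻¹:Oˣ):O) : O) : K) := by push_cast; ring
      _ = 1 := by rw [hOO]; rfl
  have hv1 : v ((u : O) : K) * v (((u⁻¹ : Oˣ) : O) : K) = 1 := by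
    rw [← map_mul, h1, map_one]
  have hle1 : v ((u : O) : K) ≤ 1 := (u : O).2
  have hle2 : v (((u⁻¹ : Oˣ) : O) : K) ≤ 1 := ((u⁻¹ : Oˣ) : O).2
  have : v ((u : O) : K) = 1 := by
    refine le_antisymm hle1 ?_
    calc (1:G0) = v ((u : O) : K) * v (((u⁻¹ : Oˣ) : O) : K) := hv1.symm
      _ ≤ v ((u : O) : K) * 1 := mul_le_mul_right hle2 _
      _ = v ((u : O) : K) := mul_one _
  rw [← hu]
  exact this

lemma val_lt_one_of_residue_eq_zero {r : O} (h : IsLocalRing.residue O r = 0) :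
    v (r : K) < 1 := by
  have hmem : r ∈ IsLocalRing.maximalIdeal O := Ideal.Quotient.eq_zero_iff_mem.mp h
  have hnu : ¬ IsUnit r := (IsLocalRing.mem_maximalIdeal r).mp hmem
  rcases eq_or_ne ((r : K)) 0 with hr0 | hr0
  · rw [hr0, map_zero]
    exact zero_lt_one
  refine lt_of_le_of_ne r.2 (fun heq => hnu ?_)
  have hinv : v ((r:K)⁻¹) ≤ 1 := by rw [map_inv₀, heq]; simp
  refine IsUnit.of_mul_eq_one (a := r) ⟨(r:K)⁻¹, hinv⟩ ?_
  ext
  push_cast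
  exact mul_inv_cancel₀ hr0

lemma lift_sumsq {t : IsLocalRing.ResidueField O} (ht : IsSumSq t) :
    ∃ R : O, IsSumSq ((R : K)) ∧ IsLocalRing.residue O R = t := by
  induction ht with
  | zero => exact ⟨0, by simpa using IsSumSq.zero, by simp⟩
  | @sq_add a S pS ih =>
      obtain ⟨R, hR1, hR2⟩ := ih
      obtain ⟨A, hA⟩ := IsLocalRing.residue_surjective (R := O) a
      refine ⟨A * A + R, ?_, ?_⟩
      · push_cast
        exact IsSumSq.sq_add _ hR1
      · rw [map_add, map_mul, hA, hR2]

end Residue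


/-- Core construction: from a seed `1 + x₁² + R` of small valuation at site `i`,
produce a sum of squares with odd valuation exponent at `i` and even exponents elsewhere. -/
lemma core {n : ℕ} (v : Fin n → Valuation K G0) (hdist : Function.Injective v)
    (hsurj : ∀ i, Function.Surjective (v i)) (i : Fin n)
    (h2 : (2:K) ≠ 0) (d : ℤ) (hd0 : 0 ≤ d) (hd : v i 2 = oz (-d))
    (x₁ R : K) (hx₁ : v i x₁ = 1) (hR : IsSumSq R)
    (hF : v i (1 + x₁^2 + R) ≤ oz (-(2*d+1))) :
    ∃ s : K, IsSumSq s ∧ s ≠ 0 ∧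
      ∃ w : Fin n → ℤ, (∀ j, v j s = oz (w j)) ∧ Odd (w i) ∧ ∀ j, j ≠ i → Even (w j) := by
  by_cases hF0 : 1 + x₁^2 + R = 0
  · -- -1 is a sum of squares in K, use weak approximation directly
    have hneg : IsSumSq (-1 : K) := by
      have hid : (-1 : K) = x₁ * x₁ + R := by linear_combination - hF0
      rw [hid]
      exact IsSumSq.sq_add _ hR
    obtain ⟨x, hx0, hx⟩ := AW2 v hdist hsurj (fun j => if j = i then (-1:ℤ) else 0)
    refine ⟨x, allSumSq h2 hneg x, hx0, fun j => if j = i then (-1:ℤ) else 0, hx, ?_, ?_⟩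
    · simpa using (⟨-1, by ring⟩ : Odd (-1:ℤ))
    · intro j hj
      simpa [hj] using Even.zero
  · have hx₁0 : x₁ ≠ 0 := by
      intro h
      rw [h, map_zero] at hx₁
      exact zero_ne_one hx₁
    have h2x₁ : (2:K) * x₁ ≠ 0 := mul_ne_zero h2 hx₁0
    set δ₁ : K := (1 + x₁^2 + R) / (2 * x₁) with hδ₁def
    have hδ₁0 : δ₁ ≠ 0 := div_ne_zero hF0 h2x₁
    set x₂ : K := x₁ - δ₁ with hx₂def
    have hFid : 1 + x₂^2 + R = δ₁^2 := by
      rw [hx₂def, hδ₁def]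
      field_simp
      ring
    -- value of δ₁ at i
    obtain ⟨r, hr⟩ := exists_oz (val_ne_zero (v i) hF0)
    have hrle : r ≤ -(2*d+1) := oz_le_oz.mp (hr ▸ hF)
    have hvδ₁ : v i δ₁ = oz (r + d) := by
      rw [hδ₁def, map_div₀, map_mul, hd, hx₁, hr, mul_one, div_eq_mul_inv, oz_inv, oz_mul]
      congr 1
      ring
    have hvx₂ : v i x₂ = 1 := by
      rw [hx₂def, sub_eq_add_neg]
      rw [Valuation.map_add_eq_of_lt_left]
      · exact hx₁
      · rw [Valuation.map_neg, hvδ₁, hx₁]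
        exact lt_of_le_of_lt (oz_le_oz.mpr (by omega : r + d ≤ -1)) (by rw [← oz_zero]; exact oz_lt_oz.mpr (by omega))
    have hx₂0 : x₂ ≠ 0 := by
      intro h
      rw [h, map_zero] at hvx₂
      exact zero_ne_one hvx₂
    -- choose the B-step perturbation δ
    set e : Fin n → ℤ := fun j => vexp (v j) δ₁ with he
    set b : Fin n → ℤ := fun j => vexp (v j) (2 * x₂) with hb
    set N : Fin n → ℤ := fun j => |2 * e j| + |b j| + |e j| + 1 with hN
    obtain ⟨δ, hδ0, hδ⟩ := AW2 v hdist hsurj (fun j => if j = i then -(d+1) else -(N j))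
    set s : K := 1 + (x₂ + δ)^2 + R with hsdef
    have hsum1 : s = (2*x₂*δ) + (δ₁^2 + δ^2) := by
      rw [hsdef]
      linear_combination hFid
    have hsum2 : s = δ₁^2 + (2*x₂*δ + δ^2) := by
      rw [hsdef]
      linear_combination hFid
    have hvs_i : v i s = oz (-(2*d+1)) := by
      rw [hsum1]
      have hmain : v i (2*x₂*δ) = oz (-(2*d+1)) := by
        rw [map_mul, map_mul, hd, hvx₂, hδ i, if_pos rfl, mul_one, oz_mul]
        congr 1
        ring
      rw [Valuation.map_add_eq_of_lt_left]
      · exact hmain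
      · rw [hmain]
        calc v i (δ₁^2 + δ^2) ≤ max (v i (δ₁^2)) (v i (δ^2)) := (v i).map_add _ _
          _ < oz (-(2*d+1)) := by
              apply max_lt
              · rw [map_pow, hvδ₁, oz_pow]
                exact oz_lt_oz.mpr (by push_cast; omega)
              · rw [map_pow, hδ i, if_pos rfl, oz_pow]
                exact oz_lt_oz.mpr (by push_cast; omega)
    have hvs_j : ∀ j, j ≠ i → v j s = oz (2 * e j) := by
      intro j hj
      have hej : v j δ₁ = oz (e j) := vexp_spec (v j) hδ₁0
      have hbj : v j (2*x₂) = oz (b j) := vexp_spec (v j) (mul_ne_zero h2 hx₂0)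
      rw [hsum2]
      have hmain : v j (δ₁^2) = oz (2 * e j) := by
        rw [map_pow, hej, oz_pow]
        norm_num
      rw [Valuation.map_add_eq_of_lt_left]
      · exact hmain
      · rw [hmain]
        calc v j (2*x₂*δ + δ^2) ≤ max (v j (2*x₂*δ)) (v j (δ^2)) := (v j).map_add _ _
          _ < oz (2 * e j) := by
              apply max_lt
              · rw [map_mul, hbj, hδ j, if_neg hj, oz_mul]
                apply oz_lt_oz.mpr
                have h1 : e j ≤ |e j| := le_abs_self _
                have h1' : (0:ℤ) ≤ |e j| := abs_nonneg _
                have h2' : -(|2 * e j|) ≤ 2 * e j := neg_abs_le _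
                have h2'' : 2 * e j ≤ |2 * e j| := le_abs_self _
                have h3 : -(|b j|) ≤ b j := neg_abs_le _
                have h3' : b j ≤ |b j| := le_abs_self _
                simp only [hN]
                omega
              · rw [map_pow, hδ j, if_neg hj, oz_pow]
                apply oz_lt_oz.mpr
                have h1 : e j ≤ |e j| := le_abs_self _
                have h1' : (0:ℤ) ≤ |e j| := abs_nonneg _
                have h2' : -(|2 * e j|) ≤ 2 * e j := neg_abs_le _
                have h2'' : 2 * e j ≤ |2 * e j| := le_abs_self _
                have h3'' : (0:ℤ) ≤ |b j| := abs_nonneg _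
                simp only [hN]
                push_cast
                omega
    have hs0 : s ≠ 0 := by
      intro h
      rw [h, map_zero] at hvs_i
      exact (oz_ne_zero _) hvs_i.symm
    have hssq : IsSumSq s := by
      have : s = (x₂ + δ) * (x₂ + δ) + (1*1 + R) := by rw [hsdef]; ring
      rw [this]
      exact IsSumSq.sq_add _ (IsSumSq.sq_add _ hR)
    refine ⟨s, hssq, hs0, fun j => if j = i then -(2*d+1) else 2 * e j, ?_, ?_, ?_⟩
    · intro j
      rcases eq_or_ne j i with rfl | hj
      · simpa using hvs_i
      · simpa [hj] using hvs_j j hj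
    · have hodd' : Odd (-(2*d+1)) := ⟨-(d+1), by ring⟩
      simpa using hodd'
    · intro j hj
      simpa [hj] using (⟨e j, by ring⟩ : Even (2 * e j))


lemma site {n : ℕ} (v : Fin n → Valuation K G0) (hdist : Function.Injective v)
    (hsurj : ∀ i, Function.Surjective (v i)) (h2 : (2:K) ≠ 0)
    (hres : ∀ i, IsSumSq (-1 : IsLocalRing.ResidueField (v i).valuationSubring)) (i : Fin n) :
    ∃ s : K, IsSumSq s ∧ s ≠ 0 ∧
      ∃ w : Fin n → ℤ, (∀ j, v j s = oz (w j)) ∧ Odd (w i) ∧ ∀ j, j ≠ i → Even (w j) := by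
  have h2le : v i (2:K) ≤ 1 := by
    have h := (v i).map_add 1 1
    rw [show ((1:K) + 1) = 2 by norm_num] at h
    simpa using h
  rcases lt_or_eq_of_le h2le with hlt | heq
  · -- residue characteristic 2 : use the seed 8 = 1 + 1² + (1² + (2² + 0))
    obtain ⟨t, ht⟩ := exists_oz (val_ne_zero (v i) h2)
    have htneg : t ≤ -1 := by
      rw [ht] at hlt
      exact oz_le_oz.mp (le_oz_neg_one_of_lt_one hlt)
    have hRsq : IsSumSq ((1:K)^2 + ((1:K)^2 + ((2:K)^2 + 0))) :=
      (isSumSq_sq' _).add ((isSumSq_sq' _).add ((isSumSq_sq' _).add IsSumSq.zero))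
    refine core v hdist hsurj i h2 (-t) (by omega) (by rw [ht]; norm_num)
      1 ((1:K)^2 + ((1:K)^2 + ((2:K)^2 + 0))) (map_one _) hRsq ?_
    have h8 : (1 + (1:K)^2 + ((1:K)^2 + ((1:K)^2 + ((2:K)^2 + 0))) : K) = 2^3 := by norm_num
    rw [h8, map_pow, ht, oz_pow]
    apply oz_le_oz.mpr
    push_cast
    omega
  · -- residue characteristic ≠ 2 : lift a representation of -1 from the residue field
    have hneg1 : (-1 : IsLocalRing.ResidueField (v i).valuationSubring) ≠ 0 := by
      simp
    obtain ⟨a, S, ha, hS, hdecomp⟩ := isSumSq_head (hres i) hneg1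
    obtain ⟨A, hA⟩ := IsLocalRing.residue_surjective a
    obtain ⟨R, hRsum, hRres⟩ := lift_sumsq (v i) hS
    have hx₁ : v i ((A:K)) = 1 :=
      val_eq_one_of_residue_ne_zero (v i) (r := A) (by rw [hA]; exact ha)
    have hFres : IsLocalRing.residue (v i).valuationSubring (1 + A*A + R) = 0 := by
      rw [map_add, map_add, map_one, map_mul, hA, hRres]
      linear_combination -hdecomp
    have hFlt : v i ((1 + A*A + R : (v i).valuationSubring) : K) < 1 :=
      val_lt_one_of_residue_eq_zero (v i) hFres
    have hcoe : ((1 + A*A + R : (v i).valuationSubring) : K) = 1 + (A:K)^2 + (R:K) := by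
      push_cast
      ring
    refine core v hdist hsurj i h2 0 le_rfl
      (by rw [show -(0:ℤ) = 0 by ring, oz_zero]; exact heq) (A:K) (R:K) hx₁ hRsum ?_
    rw [show -(2*(0:ℤ)+1) = -1 by ring, ← hcoe]
    exact le_oz_neg_one_of_lt_one hFlt


lemma oz_prod {ι : Type*} (t : Finset ι) (g : ι → ℤ) : ∏ i ∈ t, oz (g i) = oz (∑ i ∈ t, g i) := by
  induction t using Finset.cons_induction with
  | empty => simp
  | cons a t ha ih => rw [Finset.prod_cons, Finset.sum_cons, ih, oz_mul]

lemma even_sum' {ι : Type*} (t : Finset ι) (g : ι → ℤ) (h : ∀ i ∈ t, Even (g i)) :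
    Even (∑ i ∈ t, g i) := by
  induction t using Finset.cons_induction with
  | empty => simp
  | cons a t ha ih =>
      rw [Finset.sum_cons]
      exact (h a (Finset.mem_cons_self a t)).add (ih (fun i hi => h i (Finset.mem_cons.mpr (Or.inr hi))))

theorem main (K : Type) [Field K] (hchar : ringChar K ≠ 2) (n : ℕ)
    (v : Fin n → Valuation K (WithZero (Multiplicative ℤ)))
    (hdist : Function.Injective v)
    (hsurj : ∀ i, Function.Surjective (v i))
    (hres : ∀ i, IsSumSq (-1 : IsLocalRing.ResidueField (v i).valuationSubring)) :
    ∀ f : Fin n → ℤ, ∃ σ : K, IsSumSq σ ∧ σ ≠ 0 ∧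
      ∀ i, v i σ = ((Multiplicative.ofAdd (-(f i)) : Multiplicative ℤ) :
        WithZero (Multiplicative ℤ)) := by
  intro f
  have h2 : (2:K) ≠ 0 := by
    intro h
    have hd2 : ringChar K ∣ 2 := ringChar.dvd (by exact_mod_cast h)
    rcases (Nat.dvd_prime Nat.prime_two).mp hd2 with h1 | h1
    · have hone : ((1:ℕ):K) = 0 :=
        (CharP.cast_eq_zero_iff K (ringChar K) 1).mpr (by rw [h1])
      simp at hone
    · exact hchar h1
  choose s hs1 hs0 w hw hodd heven using site v hdist hsurj h2 hres
  set ε : Fin n → ℕ := fun i => if Even (f i) then 0 else 1 with hε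
  set σ₁ : K := ∏ i, s i ^ ε i with hσ₁
  set u : Fin n → ℤ := fun j => ∑ i, (ε i : ℤ) * w i j with hu
  have hvσ₁ : ∀ j, v j σ₁ = oz (u j) := by
    intro j
    rw [hσ₁, map_prod, hu, ← oz_prod]
    apply Finset.prod_congr rfl
    intro i _
    rw [map_pow, hw i j, oz_pow]
  have hpar : ∀ j, Even (-(f j) - u j) := by
    intro j
    have hsplit : u j = (ε j : ℤ) * w j j + ∑ i ∈ Finset.univ.erase j, (ε i : ℤ) * w i j :=
      (Finset.add_sum_erase _ _ (Finset.mem_univ j)).symm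
    have hev_rest : Even (∑ i ∈ Finset.univ.erase j, (ε i : ℤ) * w i j) :=
      even_sum' _ _ (fun i hi =>
        (heven i j (Ne.symm (Finset.mem_erase.mp hi).1)).mul_left _)
    have h1 : Even (-(f j) - (ε j : ℤ) * w j j) := by
      by_cases hfe : Even (f j)
      · have : ε j = 0 := by rw [hε]; simp [hfe]
        rw [this]
        simpa using hfe.neg
      · have hodd_f : Odd (f j) := Int.not_even_iff_odd.mp hfe
        have : ε j = 1 := by rw [hε]; simp [hfe]
        rw [this]
        push_cast
        rw [one_mul]
        exact (hodd_f.neg).sub_odd (hodd j)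
    have h2e := h1.sub hev_rest
    rw [hsplit]
    rw [← sub_sub]
    exact h2e
  choose g hg using hpar
  obtain ⟨x, hx0, hx⟩ := AW2 v hdist hsurj g
  refine ⟨σ₁ * x ^ 2, ?_, ?_, ?_⟩
  · apply isSumSq_mul
    · rw [hσ₁]
      apply Finset.prod_induction _ IsSumSq (fun a b ha hb => isSumSq_mul ha hb) isSumSq_one'
      intro i _
      by_cases hfe : Even (f i)
      · have : ε i = 0 := by rw [hε]; simp [hfe]
        rw [this, pow_zero]
        exact isSumSq_one'
      · have : ε i = 1 := by rw [hε]; simp [hfe]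
        rw [this, pow_one]
        exact hs1 i
    · exact isSumSq_sq' x
  · apply mul_ne_zero
    · rw [hσ₁]
      exact Finset.prod_ne_zero_iff.mpr (fun i _ => pow_ne_zero _ (hs0 i))
    · exact pow_ne_zero _ hx0
  · intro i
    have hval : v i (σ₁ * x ^ 2) = oz (-(f i)) := by
      rw [map_mul, map_pow, hvσ₁ i, hx i, oz_pow, oz_mul]
      congr 1
      have := hg i
      omega
    simpa [oz] using hval

end
end StmtOne

/-- For finitely many distinct discrete (surjective ℤ-valued) valuations with
nonreal residue fields on a field `K` of characteristic ≠ 2, the map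
`σ ↦ (v₁ σ, …, vₙ σ)` from nonzero sums of squares to `ℤⁿ` is surjective. -/
theorem stmt_1 (K : Type) [Field K] (hchar : ringChar K ≠ 2) (n : ℕ)
    (v : Fin n → Valuation K (WithZero (Multiplicative ℤ)))
    (hdist : Function.Injective v)
    (hsurj : ∀ i, Function.Surjective (v i))
    (hres : ∀ i, IsSumSq (-1 : IsLocalRing.ResidueField (v i).valuationSubring)) :
    ∀ f : Fin n → ℤ, ∃ σ : K, IsSumSq σ ∧ σ ≠ 0 ∧
      ∀ i, v i σ = ((Multiplicative.ofAdd (-(f i)) : Multiplicative ℤ) :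
        WithZero (Multiplicative ℤ)) := by
  exact StmtOne.main K hchar n v hdist hsurj hres
end

section
/- Let E/F be a finite extension of fields of characteristic different from 2. If E is pythagorean, then F is pythagorean. -/
section Aux

variable {F E : Type} [Field F] [Field E] [Algebra F E]

/-- Linear independence of `1, s` over a subfield not containing `s`. -/
private lemma pyth_indep {K : IntermediateField F E} {s p q p' q' : E}
    (hs : s ∉ K) (hp : p ∈ K) (hq : q ∈ K) (hp' : p' ∈ K) (hq' : q' ∈ K)
    (h : p + q * s = p' + q' * s) : p = p' ∧ q = q' := by
  by_cases hqq : q = q'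
  · refine ⟨?_, hqq⟩
    subst hqq
    exact add_right_cancel h
  · exfalso
    apply hs
    have hne : q - q' ≠ 0 := sub_ne_zero.mpr hqq
    have : s = (p' - p) / (q - q') := by
      field_simp
      linear_combination h
    rw [this]
    exact div_mem (sub_mem hp' hp) (sub_mem hq hq')

/-- Adjoining a square root `s` of an element of `K` yields an intermediate field whose
elements are exactly `x + y*s`. -/
private def pythAdj (K : IntermediateField F E) (s : E) (hd : s ^ 2 ∈ K) (hs : s ∉ K) :
    IntermediateField F E where
  carrier := {a | ∃ x ∈ K, ∃ y ∈ K, a = x + y * s}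
  add_mem' := by
    rintro a b ⟨x, hx, y, hy, rfl⟩ ⟨x', hx', y', hy', rfl⟩
    exact ⟨x + x', add_mem hx hx', y + y', add_mem hy hy', by ring⟩
  mul_mem' := by
    rintro a b ⟨x, hx, y, hy, rfl⟩ ⟨x', hx', y', hy', rfl⟩
    refine ⟨x * x' + y * y' * s ^ 2, add_mem (mul_mem hx hx') (mul_mem (mul_mem hy hy') hd),
      x * y' + x' * y, add_mem (mul_mem hx hy') (mul_mem hx' hy), by ring⟩
  algebraMap_mem' := fun r => ⟨algebraMap F E r, K.algebraMap_mem r, 0, zero_mem K, by ring⟩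
  inv_mem' := by
    rintro a ⟨x, hx, y, hy, rfl⟩
    by_cases ha : x + y * s = 0
    · exact ⟨0, zero_mem K, 0, zero_mem K, by rw [ha]; simp⟩
    · have hn : x ^ 2 - s ^ 2 * y ^ 2 ≠ 0 := by
        intro h0
        by_cases hy0 : y = 0
        · apply ha
          have hx0 : x = 0 := by
            have : x ^ 2 = 0 := by rw [hy0] at h0; linear_combination h0
            exact pow_eq_zero_iff (by norm_num) |>.mp this
          rw [hx0, hy0]; ring
        · apply hs
          have h1 : s ^ 2 = (x / y) ^ 2 := by field_simp; linear_combination -h0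
          have h2 : (s - x / y) * (s + x / y) = 0 := by linear_combination h1
          rcases mul_eq_zero.mp h2 with h3 | h3
          · have : s = x / y := by linear_combination h3
            rw [this]; exact div_mem hx hy
          · have : s = -(x / y) := by linear_combination h3
            rw [this]; exact neg_mem (div_mem hx hy)
      refine ⟨x / (x ^ 2 - s ^ 2 * y ^ 2), div_mem hx (sub_mem (pow_mem hx 2)
        (mul_mem hd (pow_mem hy 2))), -y / (x ^ 2 - s ^ 2 * y ^ 2),
        div_mem (neg_mem hy) (sub_mem (pow_mem hx 2) (mul_mem hd (pow_mem hy 2))), ?_⟩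
      have key : (x + y * s) * (x / (x ^ 2 - s ^ 2 * y ^ 2) +
          -y / (x ^ 2 - s ^ 2 * y ^ 2) * s) = 1 := by
        field_simp
        rw [div_eq_one_iff_eq (by rw [mul_comm]; exact hn)]
        ring
      exact inv_eq_of_mul_eq_one_right key

/-- `K` contains a sum of two squares (of its elements) that is not a square in `K`. -/
private def PythBad (K : IntermediateField F E) : Prop :=
  ∃ u ∈ K, ∃ v ∈ K, ∀ q ∈ K, q ^ 2 ≠ u ^ 2 + v ^ 2

private lemma pyth_step (h2 : (2 : E) ≠ 0)
    (hE : ∀ a : E, IsSumSq a → IsSquare a)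
    (K : IntermediateField F E) (hK : PythBad K) :
    ∃ K' : IntermediateField F E, K < K' ∧ PythBad K' := by
  obtain ⟨u, hu, v, hv, hbad⟩ := hK
  obtain ⟨d, hd_def⟩ : ∃ d : E, d = u ^ 2 + v ^ 2 := ⟨_, rfl⟩
  rw [← hd_def] at hbad
  have hdK : d ∈ K := hd_def ▸ add_mem (pow_mem hu 2) (pow_mem hv 2)
  have hv0 : v ≠ 0 := by
    intro h0
    exact hbad u hu (by rw [hd_def, h0]; ring)
  have hd0 : d ≠ 0 := by
    intro h0
    exact hbad 0 (zero_mem K) (by rw [h0]; ring)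
  -- get a square root of d in E
  have hsum : IsSumSq d := by
    have : d = u * u + (v * v + 0) := by rw [hd_def]; ring
    rw [this]
    exact IsSumSq.sq_add u (IsSumSq.sq_add v IsSumSq.zero)
  obtain ⟨s, hs⟩ := hE d hsum
  have hs2 : s ^ 2 = d := by rw [hs]; ring
  have hsK : s ∉ K := by
    intro h
    exact hbad s h hs2
  have hs2' : s ^ 2 ∈ K := hs2 ▸ hdK
  let K' : IntermediateField F E := pythAdj K s hs2' hsK
  have hmem : ∀ x ∈ K, x ∈ K' := by
    intro x hx
    exact ⟨x, hx, 0, zero_mem K, by ring⟩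
  have hsK' : s ∈ K' := ⟨0, zero_mem K, 1, one_mem K, by ring⟩
  have hle : K ≤ K' := hmem
  refine ⟨K', lt_of_le_of_ne hle (by
    intro h
    exact hsK (h ▸ hsK')), ?_⟩
  -- new bad pair: (1, (u+s)/v)
  obtain ⟨t, ht_def⟩ : ∃ t : E, t = (u + s) / v := ⟨_, rfl⟩
  have htK' : t ∈ K' := by
    rw [ht_def]; exact div_mem (add_mem (hmem u hu) hsK') (hmem v hv)
  refine ⟨1, one_mem K', t, htK', ?_⟩
  rintro q ⟨x, hx, y, hy, rfl⟩ heq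
  -- from heq derive the coefficient equations
  have hmain : (x ^ 2 + d * y ^ 2) * v ^ 2 + (2 * x * y * v ^ 2) * s
      = (2 * d) + (2 * u) * s := by
    have hv2 : v ^ 2 ≠ 0 := pow_ne_zero 2 hv0
    have h1 : (x + y * s) ^ 2 * v ^ 2 = v ^ 2 + (u + s) ^ 2 := by
      have : (x + y * s) ^ 2 = 1 ^ 2 + t ^ 2 := heq
      rw [ht_def] at this
      field_simp at this
      linear_combination this
    linear_combination h1 + (1 - y ^ 2 * v ^ 2) * hs2 - hd_def
  have h2K : (2 : E) ∈ K := by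
    have h11 : (1 : E) + 1 ∈ K := add_mem (one_mem K) (one_mem K)
    rw [one_add_one_eq_two] at h11
    exact h11
  obtain ⟨h1, h2⟩ := pyth_indep hsK
    (mul_mem (add_mem (pow_mem hx 2) (mul_mem hdK (pow_mem hy 2))) (pow_mem hv 2))
    (mul_mem (mul_mem (mul_mem h2K hx) hy) (pow_mem hv 2))
    (mul_mem h2K hdK)
    (mul_mem h2K hu)
    hmain
  have key : ((x ^ 2 - d * y ^ 2) * v ^ 2) ^ 2 = 4 * d * v ^ 2 := by
    linear_combination ((x ^ 2 + d * y ^ 2) * v ^ 2 + 2 * d) * h1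
      - 2 * d * (x * y * v ^ 2 + u) * h2 + 4 * d * hd_def
  set q0 : E := (x ^ 2 - d * y ^ 2) * v / 2 with hq0
  have hq0K : q0 ∈ K :=
    div_mem (mul_mem (sub_mem (pow_mem hx 2) (mul_mem hdK (pow_mem hy 2))) hv) h2K
  apply hbad q0 hq0K
  have hv2 : v ^ 2 ≠ 0 := pow_ne_zero 2 hv0
  have key2 : ((x ^ 2 - d * y ^ 2) * v) ^ 2 = 4 * d := by
    apply mul_right_cancel₀ hv2
    linear_combination key
  rw [hq0]
  field_simp
  linear_combination key2
end Aux

/-- If `E/F` is a finite extension of fields of characteristic ≠ 2 and `E` is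
pythagorean, then `F` is pythagorean. -/
theorem stmt_3 (F E : Type) [Field F] [Field E] [Algebra F E] [FiniteDimensional F E]
    (hchar : ringChar F ≠ 2)
    (hE : ∀ a : E, IsSumSq a → IsSquare a) :
    ∀ a : F, IsSumSq a → IsSquare a := by
  have h2F : (2 : F) ≠ 0 := Ring.two_ne_zero hchar
  have h2E : (2 : E) ≠ 0 := by
    have : (2 : E) = algebraMap F E 2 := by rw [map_ofNat]
    rw [this]
    intro h
    apply h2F
    apply RingHom.injective (algebraMap F E)
    rw [map_zero]
    exact h
  -- key: every sum of two squares in F is a square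
  have key : ∀ x y : F, IsSquare (x ^ 2 + y ^ 2) := by
    intro x y
    by_contra hns
    have hbad0 : PythBad (⊥ : IntermediateField F E) := by
      refine ⟨algebraMap F E x, IntermediateField.algebraMap_mem ⊥ x,
        algebraMap F E y, IntermediateField.algebraMap_mem ⊥ y, ?_⟩
      intro q hq heq
      obtain ⟨c, rfl⟩ := IntermediateField.mem_bot.mp hq
      apply hns
      have hmap : algebraMap F E (c * c) = algebraMap F E (x ^ 2 + y ^ 2) := by
        push_cast [map_add, map_mul, map_pow]
        linear_combination heq
      exact ⟨c, ((algebraMap F E).injective hmap).symm⟩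
    -- build arbitrarily large intermediate fields: contradiction with finiteness
    have grow : ∀ n : ℕ, ∃ K : IntermediateField F E, PythBad K ∧ n ≤ Module.finrank F K := by
      intro n
      induction n with
      | zero => exact ⟨⊥, hbad0, Nat.zero_le _⟩
      | succ n ih =>
        obtain ⟨K, hK, hn⟩ := ih
        obtain ⟨K', hlt, hK'⟩ := pyth_step h2E hE K hK
        refine ⟨K', hK', ?_⟩
        have hsub : K.toSubmodule < K'.toSubmodule := hlt
        have hlt2 := Submodule.finrank_lt_finrank_of_lt hsub
        rw [Subalgebra.finrank_toSubmodule, Subalgebra.finrank_toSubmodule] at hlt2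
        have : Module.finrank F K.toSubalgebra = Module.finrank F K := rfl
        rw [this] at hlt2
        have : Module.finrank F K'.toSubalgebra = Module.finrank F K' := rfl
        rw [this] at hlt2
        omega
    obtain ⟨K, _, hn⟩ := grow (Module.finrank F E + 1)
    have : Module.finrank F K ≤ Module.finrank F E := by
      have h := Submodule.finrank_le (Subalgebra.toSubmodule K.toSubalgebra)
      rw [Subalgebra.finrank_toSubmodule] at h
      exact h
    omega
  -- conclude by induction on sums of squares
  intro a ha
  induction ha with
  | zero => exact ⟨0, by ring⟩
  | @sq_add b S hS ih =>
    obtain ⟨y, hy⟩ := ih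
    have : b * b + S = b ^ 2 + y ^ 2 := by rw [hy]; ring
    rw [this]
    exact key b y
end

section
/- Let F be a field such that for every proper finite separable extension K/F and every chain of fields F ⊆ F̃ ⊊ K, the set of sums of squares of K is not contained in F̃·K². Let E₀/F be a (possibly infinite) Galois extension such that E₀ is pythagorean. Then every proper finite separable extension of E₀ is non-pythagorean. -/
/-- A field is pythagorean if every sum of squares is a square. -/
def Pythagorean (K : Type) [Field K] : Prop := ∀ a : K, IsSumSq a → IsSquare a

lemma isSumSq_map {R S : Type*} [CommRing R] [CommRing S] (f : R →+* S) {a : R}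
    (h : IsSumSq a) : IsSumSq (f a) := by
  induction h with
  | zero => simpa using IsSumSq.zero
  | sq_add a _ ih => simpa using IsSumSq.sq_add (f a) ih

set_option maxHeartbeats 1000000 in
open IntermediateField in
/-- Suppose for every proper finite separable extension `K/F` and every chain
`F ⊆ F̃ ⊊ K` we have `ΣK² ⊄ F̃K²`.  If `E₀/F` is a (possibly infinite) Galois extension and
`E₀` is pythagorean, then every proper finite separable extension of `E₀` is
non-pythagorean. -/
theorem stmt_5 (F : Type) [Field F]
    (hF : ∀ (K : Type) [Field K] [Algebra F K] [FiniteDimensional F K]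
      [Algebra.IsSeparable F K], 1 < Module.finrank F K →
      ∀ Ft : IntermediateField F K, Ft ≠ ⊤ →
      ∃ σ : K, IsSumSq σ ∧ ∀ t ∈ Ft, ∀ x : K, σ ≠ t * x ^ 2)
    (E₀ : Type) [Field E₀] [Algebra F E₀] [IsGalois F E₀] (hpyth : Pythagorean E₀) :
    ∀ (L : Type) [Field L] [Algebra E₀ L] [FiniteDimensional E₀ L]
      [Algebra.IsSeparable E₀ L], 1 < Module.finrank E₀ L → ¬ Pythagorean L := by
  intro L _ _ _ _ hL hpL
  letI : Algebra F L := ((algebraMap E₀ L).comp (algebraMap F E₀)).toAlgebra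
  haveI : IsScalarTower F E₀ L := IsScalarTower.of_algebraMap_eq fun _ => rfl
  haveI : Algebra.IsSeparable F L := Algebra.IsSeparable.trans F E₀ L
  obtain ⟨α, hαtop⟩ := Field.exists_primitive_element E₀ L
  have hαintE : IsIntegral E₀ α := IsIntegral.of_finite E₀ α
  have hαint : IsIntegral F α := (Algebra.IsSeparable.isSeparable F α).isIntegral
  -- α is not in the image of E₀
  have hαE : α ∉ Set.range (algebraMap E₀ L) := by
    rintro ⟨a, rfl⟩
    have hbot : E₀⟮(algebraMap E₀ L) a⟯ = ⊥ := by
      rw [IntermediateField.adjoin_simple_eq_bot_iff]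
      exact IntermediateField.algebraMap_mem ⊥ a
    rw [hbot] at hαtop
    have h1 : Module.finrank E₀ L = 1 := by
      rw [← IntermediateField.finrank_bot' (F := E₀) (E := L), hαtop,
        IntermediateField.finrank_top]
    omega
  -- The finite extension K = F(α)
  set K : IntermediateField F L := F⟮α⟯ with hK
  haveI : FiniteDimensional F ↥K := IntermediateField.adjoin.finiteDimensional hαint
  haveI : Algebra.IsSeparable F ↥K := Algebra.isSeparable_tower_bot_of_isSeparable F ↥K L
  have hαK : α ∈ K := IntermediateField.mem_adjoin_simple_self F α
  have hKrank : 1 < Module.finrank F ↥K := by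
    rcases Nat.lt_or_ge 1 (Module.finrank F ↥K) with h | h
    · exact h
    · exfalso
      have hpos : 0 < Module.finrank F ↥K := Module.finrank_pos
      have h1 : Module.finrank F ↥K = 1 := by omega
      rw [IntermediateField.finrank_eq_one_iff] at h1
      rw [h1] at hαK
      rw [IntermediateField.mem_bot] at hαK
      obtain ⟨f, hf⟩ := hαK
      exact hαE ⟨algebraMap F E₀ f, hf⟩
  -- the image of E₀ in L and the intermediate field F̃ = K ∩ E₀
  set E₀' : IntermediateField F L := (IsScalarTower.toAlgHom F E₀ L).fieldRange with hE₀'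
  set Ft : IntermediateField F ↥K := E₀'.comap K.val with hFt
  have hFtne : Ft ≠ ⊤ := by
    intro h
    have : (⟨α, hαK⟩ : ↥K) ∈ Ft := h ▸ IntermediateField.mem_top
    have h2 : K.val ⟨α, hαK⟩ ∈ E₀' := this
    obtain ⟨a, ha⟩ := h2
    exact hαE ⟨a, ha⟩
  obtain ⟨σ, hσsum, hσ⟩ := hF ↥K hKrank Ft hFtne
  -- σ as an element of L is a sum of squares, hence a square y² by Pythagorean L
  have hσL : IsSumSq ((algebraMap ↥K L) σ) := isSumSq_map (algebraMap ↥K L) hσsum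
  obtain ⟨y, hy⟩ := hpL _ hσL
  -- σ ≠ 0
  have hσ0 : σ ≠ 0 := by
    intro h
    exact hσ 0 (zero_mem Ft) 0 (by rw [h]; ring)
  have hy0 : y ≠ 0 := by
    intro h
    apply hσ0
    have : (algebraMap ↥K L) σ = 0 := by rw [hy, h, mul_zero]
    exact (map_eq_zero _).mp this
  -- power basis of L over E₀ with generator α
  let pb : PowerBasis E₀ L :=
    (IntermediateField.adjoin.powerBasis hαintE).map
      ((IntermediateField.equivOfEq hαtop).trans IntermediateField.topEquiv)
  have hpbgen : pb.gen = α := by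
    simp [pb, IntermediateField.adjoin.powerBasis_gen]
  -- coordinates of y over the power basis
  set e : Fin pb.dim → E₀ := fun i => pb.basis.repr y i with he
  have hyrepr : y = ∑ i, e i • α ^ (i:ℕ) := by
    conv_lhs => rw [← pb.basis.sum_repr y]
    exact Finset.sum_congr rfl fun i _ => by rw [PowerBasis.coe_basis, hpbgen]
  have hint : ∀ a : E₀, IsIntegral F a := fun a =>
    (Algebra.IsSeparable.isSeparable F a).isIntegral
  set p : Polynomial F := ∏ i, minpoly F (e i) with hp
  have hp0 : p ≠ 0 := Finset.prod_ne_zero_iff.mpr fun i _ => minpoly.ne_zero (hint _)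
  have hsplitE : (p.map (algebraMap F E₀)).Splits := by
    rw [hp, Polynomial.map_prod]
    exact Polynomial.Splits.prod fun i _ => Normal.splits inferInstance (e i)
  have hsplitL : (p.map (algebraMap F L)).Splits := by
    rw [IsScalarTower.algebraMap_eq F E₀ L, ← Polynomial.map_map]
    exact hsplitE.map _
  set q : Polynomial ↥K := p.map (algebraMap F ↥K) with hq
  have hq0 : q ≠ 0 := Polynomial.map_ne_zero hp0
  have hsplitq : (q.map (algebraMap ↥K L)).Splits := by
    rw [hq, Polynomial.map_map, ← IsScalarTower.algebraMap_eq]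
    exact hsplitL
  -- every root of q in L lies in the image of E₀
  have hrootE : ∀ z ∈ q.rootSet L, z ∈ E₀' := by
    intro z hz
    rw [Polynomial.mem_rootSet] at hz
    have hz' : z ∈ p.rootSet L := by
      rw [Polynomial.mem_rootSet]
      exact ⟨hp0, by rw [← hz.2, hq, Polynomial.aeval_map_algebraMap]⟩
    rw [← Polynomial.Splits.image_rootSet hsplitE (IsScalarTower.toAlgHom F E₀ L)] at hz'
    obtain ⟨w, _, hw⟩ := hz'
    exact ⟨w, hw⟩
  have heroot : ∀ i, (algebraMap E₀ L) (e i) ∈ q.rootSet L := by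
    intro i
    rw [Polynomial.mem_rootSet]
    refine ⟨hq0, ?_⟩
    rw [hq, Polynomial.aeval_map_algebraMap, Polynomial.aeval_algebraMap_apply]
    have h0 : (Polynomial.aeval (e i)) p = 0 := by
      rw [hp, map_prod]
      exact Finset.prod_eq_zero (Finset.mem_univ i) (minpoly.aeval F (e i))
    rw [h0, map_zero]
  -- the splitting field N of q over K, a finite Galois extension of K inside L
  set N : IntermediateField ↥K L := IntermediateField.adjoin ↥K (q.rootSet L) with hN
  haveI hsf : q.IsSplittingField ↥K ↥N :=
    IntermediateField.adjoin_rootSet_isSplittingField hsplitq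
  haveI : FiniteDimensional ↥K ↥N := Polynomial.IsSplittingField.finiteDimensional ↥N q
  haveI : Normal ↥K ↥N := Normal.of_isSplittingField q
  haveI : Algebra.IsSeparable ↥K L := Algebra.isSeparable_tower_top_of_isSeparable F ↥K L
  haveI : Algebra.IsSeparable ↥K ↥N := Algebra.isSeparable_tower_bot_of_isSeparable ↥K ↥N L
  haveI : IsGalois ↥K ↥N := ⟨⟩
  -- elements of N
  have hαN : α ∈ N := by
    have h1 := IntermediateField.algebraMap_mem N (⟨α, hαK⟩ : ↥K)
    exact h1
  have heN : ∀ i, (algebraMap E₀ L) (e i) ∈ N := fun i =>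
    IntermediateField.subset_adjoin _ _ (heroot i)
  have hyN : y ∈ N := by
    rw [hyrepr]
    refine sum_mem fun i _ => ?_
    rw [Algebra.smul_def]
    exact mul_mem (heN i) (pow_mem hαN i)
  set yN : ↥N := ⟨y, hyN⟩ with hyNdef
  set aN : ↥N := ⟨α, hαN⟩ with haNdef
  set eN : Fin pb.dim → ↥N := fun i => ⟨(algebraMap E₀ L) (e i), heN i⟩ with heNdef
  have hyNsum : yN = ∑ i, eN i * aN ^ (i:ℕ) := by
    apply Subtype.ext
    show y = ((∑ i, eN i * aN ^ (i:ℕ) : ↥N) : L)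
    rw [AddSubmonoidClass.coe_finset_sum]
    rw [hyrepr]
    exact Finset.sum_congr rfl fun i _ => by
      rw [Algebra.smul_def]; rfl
  have hyNσ : yN * yN = algebraMap ↥K ↥N σ := by
    apply Subtype.ext
    show y * y = ((algebraMap ↥K ↥N σ : ↥N) : L)
    rw [← hy]
    rfl
  have haNfix : ∀ g : ↥N ≃ₐ[↥K] ↥N, g aN = aN := by
    intro g
    have : aN = algebraMap ↥K ↥N ⟨α, hαK⟩ := by apply Subtype.ext; rfl
    rw [this, AlgEquiv.commutes]
  -- the key sign analysis
  have key : ∀ g : ↥N ≃ₐ[↥K] ↥N,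
      (g yN = yN ∧ ∀ i, g (eN i) = eN i) ∨ (g yN = -yN ∧ ∀ i, g (eN i) = -eN i) := by
    intro g
    have hgy : g yN = yN ∨ g yN = -yN := by
      have h2 : g yN * g yN = yN * yN := by
        rw [← map_mul, hyNσ, AlgEquiv.commutes]
      exact mul_self_eq_mul_self_iff.mp h2
    have hd : ∀ i, ∃ dv : E₀, ((g (eN i) : ↥N) : L) = algebraMap E₀ L dv := by
      intro i
      have hq1 : (Polynomial.aeval (eN i)) q = 0 := by
        apply (map_eq_zero N.val).mp
        have h2 := Polynomial.aeval_algHom_apply N.val (eN i) q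
        rw [← h2]
        exact (Polynomial.mem_rootSet.mp (heroot i)).2
      have hq2 : (Polynomial.aeval (g (eN i))) q = 0 := by
        have h2 := Polynomial.aeval_algHom_apply (g : ↥N →ₐ[↥K] ↥N) (eN i) q
        rw [hq1, map_zero] at h2
        exact h2
      have hroot : ((g (eN i) : ↥N) : L) ∈ q.rootSet L := by
        rw [Polynomial.mem_rootSet]
        refine ⟨hq0, ?_⟩
        have h3 := Polynomial.aeval_algHom_apply N.val (g (eN i)) q
        rw [hq2, map_zero] at h3
        exact h3
      obtain ⟨w, hw⟩ := hrootE _ hroot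
      exact ⟨w, hw.symm⟩
    choose dv hdv using hd
    have hgysum : ((g yN : ↥N) : L) = ∑ i, dv i • pb.basis i := by
      have h1 : g yN = ∑ i, g (eN i) * aN ^ (i:ℕ) := by
        rw [hyNsum, map_sum]
        exact Finset.sum_congr rfl fun i _ => by rw [map_mul, map_pow, haNfix g]
      calc ((g yN : ↥N) : L) = ((∑ i, g (eN i) * aN ^ (i:ℕ) : ↥N) : L) := by rw [h1]
        _ = ∑ i, ((g (eN i) : ↥N) : L) * α ^ (i:ℕ) := by
            rw [AddSubmonoidClass.coe_finset_sum]
            exact Finset.sum_congr rfl fun i _ => rfl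
        _ = ∑ i, dv i • pb.basis i := by
            exact Finset.sum_congr rfl fun i _ => by
              rw [hdv i, PowerBasis.coe_basis, hpbgen, Algebra.smul_def]
    have hrepr := pb.basis.repr_sum_self dv
    rcases hgy with hcase | hcase
    · left
      refine ⟨hcase, fun i => ?_⟩
      have hdi : dv i = e i := by
        have h2 : ((g yN : ↥N) : L) = y := by rw [hcase]
        rw [h2] at hgysum
        have h3 : pb.basis.repr y = pb.basis.repr (∑ i, dv i • pb.basis i) := by rw [← hgysum]
        rw [he]
        simp only [h3, hrepr]
      apply Subtype.ext
      show ((g (eN i) : ↥N) : L) = ((eN i : ↥N) : L)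
      rw [hdv i, hdi]
    · right
      refine ⟨hcase, fun i => ?_⟩
      have hdi : dv i = -(e i) := by
        have h2 : ((g yN : ↥N) : L) = -y := by
          rw [hcase]
          simp
          rfl
        rw [h2] at hgysum
        have h5 : y = ∑ i, (-(dv i)) • pb.basis i := by
          have h6 : y = -(∑ i, dv i • pb.basis i) := by rw [← hgysum, neg_neg]
          rw [h6, ← Finset.sum_neg_distrib]
          exact Finset.sum_congr rfl fun i _ => (neg_smul _ _).symm
        have h7 : pb.basis.repr y = pb.basis.repr (∑ i, (-(dv i)) • pb.basis i) := by
          rw [← h5]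
        have h8 := pb.basis.repr_sum_self fun i => -(dv i)
        have h9 : e i = -(dv i) := by
          rw [he]
          simp only [h7, h8]
        rw [h9, neg_neg]
      apply Subtype.ext
      show ((g (eN i) : ↥N) : L) = ((-(eN i) : ↥N) : L)
      rw [hdv i, hdi, map_neg]
      simp
      rfl
  obtain ⟨j, hj⟩ : ∃ j, e j ≠ 0 := by
    by_contra h
    push_neg at h
    apply hy0
    rw [hyrepr]
    simp [h]
  have hejL : (algebraMap E₀ L) (e j) ≠ 0 := fun h0 => hj ((map_eq_zero _).mp h0)
  have hejN : eN j ≠ 0 := by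
    intro h0
    apply hejL
    have h1 := congrArg N.val h0
    rw [map_zero] at h1
    exact h1
  set xN : ↥N := yN * (eN j)⁻¹ with hxNdef
  set tN : ↥N := eN j * eN j with htNdef
  have hxfix : ∀ g : ↥N ≃ₐ[↥K] ↥N, g xN = xN := by
    intro g
    rcases key g with ⟨h1, h2⟩ | ⟨h1, h2⟩
    · rw [hxNdef, map_mul, map_inv₀, h1, h2 j]
    · rw [hxNdef, map_mul, map_inv₀, h1, h2 j, inv_neg, neg_mul_neg]
  have htfix : ∀ g : ↥N ≃ₐ[↥K] ↥N, g tN = tN := by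
    intro g
    rcases key g with ⟨h1, h2⟩ | ⟨h1, h2⟩
    · rw [htNdef, map_mul, h2 j]
    · rw [htNdef, map_mul, h2 j, neg_mul_neg]
  have hfix : ∀ z : ↥N, (∀ g : ↥N ≃ₐ[↥K] ↥N, g z = z) → ∃ w : ↥K, algebraMap ↥K ↥N w = z := by
    intro z hz
    have hmem : z ∈ IntermediateField.fixedField (⊤ : Subgroup (↥N ≃ₐ[↥K] ↥N)) :=
      fun g => hz g
    rw [← IntermediateField.fixingSubgroup_bot (F := ↥K) (E := ↥N),
      IsGalois.fixedField_fixingSubgroup ⊥] at hmem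
    rw [IntermediateField.mem_bot] at hmem
    exact hmem
  obtain ⟨xK, hxK⟩ := hfix xN hxfix
  obtain ⟨tK, htK⟩ := hfix tN htfix
  have htmem : tK ∈ Ft := by
    show K.val tK ∈ E₀'
    have h1 : K.val tK = ((tN : ↥N) : L) := by rw [← htK]; rfl
    rw [h1]
    exact ⟨e j * e j, by rw [map_mul]; rfl⟩
  apply hσ tK htmem xK
  have hinj : Function.Injective (algebraMap ↥K L) := (algebraMap ↥K L).injective
  apply hinj
  rw [hy]
  have h2 : (algebraMap ↥K L) (tK * xK ^ 2) = ((tN : ↥N) : L) * ((xN : ↥N) : L) ^ 2 := by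
    rw [map_mul, map_pow]
    congr 1
    · rw [← htK]; rfl
    · congr 1
      rw [← hxK]
      rfl
  rw [h2]
  have h3 : ((tN : ↥N) : L) = algebraMap E₀ L (e j) * algebraMap E₀ L (e j) := rfl
  have h4 : ((xN : ↥N) : L) = y * ((algebraMap E₀ L (e j)))⁻¹ := rfl
  rw [h3, h4]
  field_simp
end

section
/- Let K/E be a proper finite extension of number fields. Then the set of sums of squares in K is not contained in E·K² (the set of products of an element of E with a square in K). -/
open NumberField Polynomial UniqueFactorizationMonoid
set_option synthInstance.maxHeartbeats 1000000
set_option maxHeartbeats 3000000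

section MainA

variable {E K : Type} [Field E] [NumberField E] [Field K] [NumberField K] [Algebra E K]

lemma phi_inj : Function.Injective (algebraMap (𝓞 E) (𝓞 K)) :=
  FaithfulSMul.algebraMap_injective _ _

open Classical in
lemma count_factors_algebraMap_eq
    {q : Ideal (𝓞 E)} (hq : q.IsMaximal)
    {P1 P2 : Ideal (𝓞 K)}
    (hc1 : Ideal.comap (algebraMap (𝓞 E) (𝓞 K)) P1 = q)
    (hc2 : Ideal.comap (algebraMap (𝓞 E) (𝓞 K)) P2 = q)
    (hn1 : Multiset.count P1 (normalizedFactors (q.map (algebraMap (𝓞 E) (𝓞 K)))) =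
           Multiset.count P2 (normalizedFactors (q.map (algebraMap (𝓞 E) (𝓞 K)))))
    (w : 𝓞 E) (hw : w ≠ 0) :
    Multiset.count P1 (normalizedFactors (Ideal.span {algebraMap (𝓞 E) (𝓞 K) w})) =
      Multiset.count P2 (normalizedFactors (Ideal.span {algebraMap (𝓞 E) (𝓞 K) w})) := by
  have key : ∀ I : Ideal (𝓞 E),
      Multiset.count P1 (normalizedFactors (I.map (algebraMap (𝓞 E) (𝓞 K)))) =
      Multiset.count P2 (normalizedFactors (I.map (algebraMap (𝓞 E) (𝓞 K)))) := by
    intro I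
    induction I using UniqueFactorizationMonoid.induction_on_prime with
    | h₁ =>
        rw [Ideal.zero_eq_bot, Ideal.map_bot, ← Ideal.zero_eq_bot, normalizedFactors_zero]
        simp
    | h₂ I hI =>
        rw [Ideal.isUnit_iff.mp hI, Ideal.map_top, ← Ideal.one_eq_top, normalizedFactors_one]
        simp
    | h₃ I p hI0 hp ih =>
        have hpbot : p ≠ ⊥ := hp.ne_zero
        have hpprime : p.IsPrime := (Ideal.prime_iff_isPrime hpbot).mp hp
        have hpmax : p.IsMaximal := hpprime.isMaximal hpbot
        have hmapp : p.map (algebraMap (𝓞 E) (𝓞 K)) ≠ 0 := fun hh =>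
          hpbot ((Ideal.map_eq_bot_iff_of_injective phi_inj).mp (by rwa [Ideal.zero_eq_bot] at hh))
        have hmapI : I.map (algebraMap (𝓞 E) (𝓞 K)) ≠ 0 := fun hh =>
          hI0 ((Ideal.map_eq_bot_iff_of_injective phi_inj).mp (by rwa [Ideal.zero_eq_bot] at hh))
        rw [Ideal.map_mul, normalizedFactors_mul hmapp hmapI, Multiset.count_add,
          Multiset.count_add, ih]
        congr 1
        by_cases hpq : p = q
        · rw [hpq]; exact hn1
        · have h0 : ∀ (P : Ideal (𝓞 K)), Ideal.comap (algebraMap (𝓞 E) (𝓞 K)) P = q →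
              P ∉ normalizedFactors (p.map (algebraMap (𝓞 E) (𝓞 K))) := by
            intro P hcP hmem
            have : p.map (algebraMap (𝓞 E) (𝓞 K)) ≤ P :=
              Ideal.le_of_dvd (dvd_of_mem_normalizedFactors hmem)
            have hle : p ≤ q := by
              rw [← hcP]
              exact Ideal.map_le_iff_le_comap.mp this
            exact hpq (hpmax.eq_of_le hq.ne_top hle)
          rw [Multiset.count_eq_zero.mpr (h0 P1 hc1), Multiset.count_eq_zero.mpr (h0 P2 hc2)]
  have : Ideal.span {algebraMap (𝓞 E) (𝓞 K) w} =
      (Ideal.span {w}).map (algebraMap (𝓞 E) (𝓞 K)) := by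
    rw [Ideal.map_span, Set.image_singleton]
  rw [this]
  exact key _

open Classical in
lemma nu_mul (P : Ideal (𝓞 K)) {s t : 𝓞 K} (hs : s ≠ 0) (ht : t ≠ 0) :
    Multiset.count P (normalizedFactors (Ideal.span {s * t})) =
      Multiset.count P (normalizedFactors (Ideal.span {s})) +
      Multiset.count P (normalizedFactors (Ideal.span {t})) := by
  rw [← Ideal.span_singleton_mul_span_singleton, normalizedFactors_mul, Multiset.count_add]
  · rwa [Ne, Ideal.zero_eq_bot, Ideal.span_singleton_eq_bot]
  · rwa [Ne, Ideal.zero_eq_bot, Ideal.span_singleton_eq_bot]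

open Classical in
lemma not_eq_mul_sq
    {P1 P2 : Ideal (𝓞 K)} (hP1 : P1.IsPrime) (hP2 : P2.IsPrime)
    {σ : 𝓞 K} (hmem : σ ∈ P1) (hmem2 : σ ∉ P1 ^ 2) (hmem3 : σ ∉ P2)
    (hcnt : ∀ w : 𝓞 E, w ≠ 0 →
      Multiset.count P1 (normalizedFactors (Ideal.span {algebraMap (𝓞 E) (𝓞 K) w})) =
      Multiset.count P2 (normalizedFactors (Ideal.span {algebraMap (𝓞 E) (𝓞 K) w})))
    (e : E) (x : K) : (σ : K) ≠ algebraMap E K e * x ^ 2 := by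
  intro h
  have hσ0 : σ ≠ 0 := by
    rintro rfl
    exact hmem2 (zero_mem _)
  have hσK0 : (σ : K) ≠ 0 := RingOfIntegers.coe_ne_zero_iff.mpr hσ0
  have he0 : e ≠ 0 := by rintro rfl; simp at h; exact hσ0 h
  have hx0 : x ≠ 0 := by rintro rfl; simp at h; exact hσ0 h
  obtain ⟨⟨a, b⟩, hab⟩ := IsLocalization.surj (nonZeroDivisors (𝓞 E)) e
  obtain ⟨⟨u, v⟩, huv⟩ := IsLocalization.surj (nonZeroDivisors (𝓞 K)) x
  simp only at hab huv
  have hb0 : (b : 𝓞 E) ≠ 0 := nonZeroDivisors.coe_ne_zero b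
  have hv0 : (v : 𝓞 K) ≠ 0 := nonZeroDivisors.coe_ne_zero v
  have ha0 : a ≠ 0 := by
    rintro rfl
    rw [map_zero] at hab
    rcases mul_eq_zero.mp hab with h' | h'
    · exact he0 h'
    · exact hb0 (IsFractionRing.to_map_eq_zero_iff.mp h')
  have hu0 : u ≠ 0 := by
    rintro rfl
    rw [map_zero] at huv
    rcases mul_eq_zero.mp huv with h' | h'
    · exact hx0 h'
    · exact hv0 (IsFractionRing.to_map_eq_zero_iff.mp h')
  -- the main equation in 𝓞 K
  have tower1 : ∀ r : 𝓞 E, algebraMap E K (algebraMap (𝓞 E) E r) =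
      algebraMap (𝓞 K) K (algebraMap (𝓞 E) (𝓞 K) r) := by
    intro r
    rw [← IsScalarTower.algebraMap_apply, ← IsScalarTower.algebraMap_apply]
  have hab' : e * algebraMap (𝓞 E) E b = algebraMap (𝓞 E) E a := hab
  have huv' : x * algebraMap (𝓞 K) K v = algebraMap (𝓞 K) K u := huv
  have h' : algebraMap (𝓞 K) K σ = algebraMap E K e * x ^ 2 := h
  have keyK : algebraMap (𝓞 K) K (σ * algebraMap (𝓞 E) (𝓞 K) b * (v * v)) =
      algebraMap (𝓞 K) K (algebraMap (𝓞 E) (𝓞 K) a * (u * u)) := by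
    rw [map_mul, map_mul, map_mul, map_mul, ← tower1, ← tower1]
    calc algebraMap (𝓞 K) K σ * algebraMap E K (algebraMap (𝓞 E) E b)
          * (algebraMap (𝓞 K) K v * algebraMap (𝓞 K) K v)
        = (algebraMap E K e * x ^ 2) * algebraMap E K (algebraMap (𝓞 E) E b)
          * (algebraMap (𝓞 K) K v * algebraMap (𝓞 K) K v) := by rw [h']
      _ = algebraMap E K (e * algebraMap (𝓞 E) E b)
          * ((x * algebraMap (𝓞 K) K v) * (x * algebraMap (𝓞 K) K v)) := by
            rw [map_mul]; ring
      _ = algebraMap E K (algebraMap (𝓞 E) E a)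
          * (algebraMap (𝓞 K) K u * algebraMap (𝓞 K) K u) := by rw [hab', huv']
  have keyO : σ * algebraMap (𝓞 E) (𝓞 K) b * (v * v) =
      algebraMap (𝓞 E) (𝓞 K) a * (u * u) := RingOfIntegers.coe_injective keyK
  -- counts
  haveI : P1.IsPrime := hP1
  haveI : P2.IsPrime := hP2
  set Φ := algebraMap (𝓞 E) (𝓞 K) with hΦ
  have hΦb : Φ b ≠ 0 := fun hh => hb0 (phi_inj (by rw [hh, map_zero]))
  have hΦa : Φ a ≠ 0 := fun hh => ha0 (phi_inj (by rw [hh, map_zero]))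
  have count_eq : ∀ P : Ideal (𝓞 K),
      Multiset.count P (normalizedFactors (Ideal.span {σ})) +
      Multiset.count P (normalizedFactors (Ideal.span {Φ b})) +
      (Multiset.count P (normalizedFactors (Ideal.span {(v : 𝓞 K)})) +
       Multiset.count P (normalizedFactors (Ideal.span {(v : 𝓞 K)}))) =
      Multiset.count P (normalizedFactors (Ideal.span {Φ a})) +
      (Multiset.count P (normalizedFactors (Ideal.span {u})) +
       Multiset.count P (normalizedFactors (Ideal.span {u}))) := by
    intro P
    have lhs : Multiset.count P (normalizedFactors (Ideal.span {σ * Φ b * (v * v)})) =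
        Multiset.count P (normalizedFactors (Ideal.span {σ})) +
        Multiset.count P (normalizedFactors (Ideal.span {Φ b})) +
        (Multiset.count P (normalizedFactors (Ideal.span {(v : 𝓞 K)})) +
         Multiset.count P (normalizedFactors (Ideal.span {(v : 𝓞 K)}))) := by
      rw [nu_mul P (mul_ne_zero hσ0 hΦb) (mul_ne_zero hv0 hv0),
          nu_mul P hσ0 hΦb, nu_mul P hv0 hv0]
    have rhs : Multiset.count P (normalizedFactors (Ideal.span {Φ a * (u * u)})) =
        Multiset.count P (normalizedFactors (Ideal.span {Φ a})) +
        (Multiset.count P (normalizedFactors (Ideal.span {u})) +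
         Multiset.count P (normalizedFactors (Ideal.span {u}))) := by
      rw [nu_mul P hΦa (mul_ne_zero hu0 hu0), nu_mul P hu0 hu0]
    rw [← lhs, ← rhs, keyO]
  have h1σ : Multiset.count P1 (normalizedFactors (Ideal.span {σ})) = 1 := by
    refine Ideal.count_normalizedFactors_eq (p := P1) ?_ ?_
    · rwa [pow_one, Ideal.span_singleton_le_iff_mem]
    · rwa [Ideal.span_singleton_le_iff_mem]
  have h2σ : Multiset.count P2 (normalizedFactors (Ideal.span {σ})) = 0 := by
    refine Ideal.count_normalizedFactors_eq (p := P2) ?_ ?_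
    · rw [pow_zero, Ideal.one_eq_top]; exact le_top
    · rwa [pow_one, Ideal.span_singleton_le_iff_mem]
  have hha := hcnt a ha0
  have hhb := hcnt b hb0
  have e1 := count_eq P1
  have e2 := count_eq P2
  rw [h1σ] at e1
  rw [h2σ] at e2
  omega


end MainA

section MainB

variable {E K : Type} [Field E] [NumberField E] [Field K] [NumberField K] [Algebra E K]

open Classical in
lemma nu_mul' (P : Ideal (𝓞 K)) {s t : 𝓞 K} (hs : s ≠ 0) (ht : t ≠ 0) :
    Multiset.count P (normalizedFactors (Ideal.span {s * t})) =
      Multiset.count P (normalizedFactors (Ideal.span {s})) +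
      Multiset.count P (normalizedFactors (Ideal.span {t})) := by
  rw [← Ideal.span_singleton_mul_span_singleton, normalizedFactors_mul, Multiset.count_add]
  · rwa [Ne, Ideal.zero_eq_bot, Ideal.span_singleton_eq_bot]
  · rwa [Ne, Ideal.zero_eq_bot, Ideal.span_singleton_eq_bot]

lemma crt2 {R : Type*} [CommRing R] {I J : Ideal R} (h : I ⊔ J = ⊤) (a b : R) :
    ∃ z : R, z - a ∈ I ∧ z - b ∈ J := by
  have h1 : (1 : R) ∈ I ⊔ J := h ▸ Submodule.mem_top
  rw [Submodule.mem_sup] at h1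
  obtain ⟨i, hi, j, hj, hij⟩ := h1
  refine ⟨a * j + b * i, ?_, ?_⟩
  · have : a * j + b * i - a = (b - a) * i := by linear_combination a * hij
    rw [this]; exact Ideal.mul_mem_left _ _ hi
  · have : a * j + b * i - b = (a - b) * j := by linear_combination b * hij
    rw [this]; exact Ideal.mul_mem_left _ _ hj

lemma isSumSq_aux (A B : 𝓞 K) : IsSumSq ((algebraMap (𝓞 K) K) (A ^ 2 + B ^ 2 + 1)) := by
  have : (algebraMap (𝓞 K) K) (A ^ 2 + B ^ 2 + 1) =
      (algebraMap (𝓞 K) K A) * (algebraMap (𝓞 K) K A) +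
      ((algebraMap (𝓞 K) K B) * (algebraMap (𝓞 K) K B) + ((1 : K) * 1 + 0)) := by
    push_cast
    ring
  rw [this]
  exact IsSumSq.sq_add _ (IsSumSq.sq_add _ (IsSumSq.sq_add _ IsSumSq.zero))

open Classical in
lemma exists_sigma {P1 P2 : Ideal (𝓞 K)} (hP1 : P1.IsMaximal) (hP2 : P2.IsMaximal)
    (hne : P1 ≠ P2) (hP1b : P1 ≠ ⊥) (h2 : (2 : 𝓞 K) ∉ P1) :
    ∃ σ : 𝓞 K, IsSumSq ((algebraMap (𝓞 K) K) σ) ∧ σ ∈ P1 ∧ σ ∉ P1 ^ 2 ∧ σ ∉ P2 := by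
  haveI := hP1.isPrime
  letI : Fintype ((𝓞 K) ⧸ P1) := @Fintype.ofFinite _ (Ideal.finiteQuotientOfFreeOfNeBot P1 hP1b)
  haveI : Finite ((𝓞 K) ⧸ P1) := Finite.of_fintype _
  haveI : NeZero (ringChar ((𝓞 K) ⧸ P1)) :=
    ⟨CharP.char_ne_zero_of_finite ((𝓞 K) ⧸ P1) (ringChar ((𝓞 K) ⧸ P1))⟩
  obtain ⟨a', b', hab⟩ := CharP.sq_add_sq ((𝓞 K) ⧸ P1) (ringChar ((𝓞 K) ⧸ P1)) (-1)
  rw [Int.cast_neg, Int.cast_one] at hab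
  have h2κ : (Ideal.Quotient.mk P1) (2 : 𝓞 K) ≠ 0 := by
    rw [Ne, Ideal.Quotient.eq_zero_iff_mem]; exact h2
  -- get α β : κ with α² + β² = -1, α ≠ 0
  obtain ⟨α, β, hαβ, hα⟩ : ∃ α β : (𝓞 K) ⧸ P1, α ^ 2 + β ^ 2 = -1 ∧ α ≠ 0 := by
    by_cases ha : ((a' : ℕ) : (𝓞 K) ⧸ P1) ≠ 0
    · exact ⟨_, _, hab, ha⟩
    · push_neg at ha
      rw [ha] at hab
      refine ⟨((b' : ℕ) : (𝓞 K) ⧸ P1), 0, by simpa using hab, ?_⟩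
      intro hb
      rw [hb] at hab
      simp at hab
  obtain ⟨A, hA⟩ := Ideal.Quotient.mk_surjective α
  obtain ⟨B, hB⟩ := Ideal.Quotient.mk_surjective β
  -- uniformizer-ish element
  have hlt : P1 ^ 2 < P1 := Ideal.pow_lt_self P1 hP1b hP1.ne_top 2 le_rfl
  obtain ⟨π0, hπ0P1, hπ0sq⟩ := SetLike.exists_of_lt hlt
  have hcop : P1 ⊔ P2 = ⊤ := hP1.coprime_of_ne hP2 hne
  have hcop2 : P1 ^ 2 ⊔ P2 ^ 2 = ⊤ :=
    Ideal.isCoprime_iff_sup_eq.mp ((Ideal.isCoprime_iff_sup_eq.mpr hcop).pow)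
  obtain ⟨x0, hx0A, hx0P2⟩ := crt2 hcop A 0
  obtain ⟨y0, hy0B, hy0P2⟩ := crt2 hcop B 0
  obtain ⟨π, hππ0, hπP2sq⟩ := crt2 hcop2 π0 0
  rw [sub_zero] at hx0P2 hy0P2 hπP2sq
  have hπP1 : π ∈ P1 := by
    have := Ideal.add_mem P1 (Ideal.pow_le_self two_ne_zero hππ0) hπ0P1
    simpa using this
  have hπsq : π ∉ P1 ^ 2 := fun hmem => hπ0sq (by simpa using Ideal.sub_mem _ hmem hππ0)
  have hπP2 : π ∈ P2 := Ideal.pow_le_self two_ne_zero hπP2sq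
  have hmkx0 : (Ideal.Quotient.mk P1) x0 = α := by
    rw [← hA]
    exact (Ideal.Quotient.mk_eq_mk_iff_sub_mem x0 A).mpr hx0A
  have hmky0 : (Ideal.Quotient.mk P1) y0 = β := by
    rw [← hB]
    exact (Ideal.Quotient.mk_eq_mk_iff_sub_mem y0 B).mpr hy0B
  have hmkπ : (Ideal.Quotient.mk P1) π = 0 := Ideal.Quotient.eq_zero_iff_mem.mpr hπP1
  -- the two candidates
  have hσ1P1 : x0 ^ 2 + y0 ^ 2 + 1 ∈ P1 := by
    rw [← Ideal.Quotient.eq_zero_iff_mem]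
    rw [map_add, map_add, map_pow, map_pow, map_one, hmkx0, hmky0, hαβ]
    ring
  have hσ2P1 : (x0 + π) ^ 2 + y0 ^ 2 + 1 ∈ P1 := by
    rw [← Ideal.Quotient.eq_zero_iff_mem]
    rw [map_add, map_add, map_pow, map_pow, map_one, map_add, hmkx0, hmky0, hmkπ, add_zero, hαβ]
    ring
  have hnotP2 : ∀ z : 𝓞 K, z ∈ P2 → z ^ 2 + y0 ^ 2 + 1 ∉ P2 := by
    intro z hz hmem
    have h1 : (1 : 𝓞 K) ∈ P2 := by
      have : z ^ 2 + y0 ^ 2 ∈ P2 := by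
        refine Ideal.add_mem _ ?_ ?_
        · rw [sq]; exact Ideal.mul_mem_left _ _ hz
        · rw [sq]; exact Ideal.mul_mem_left _ _ hy0P2
      simpa using Ideal.sub_mem _ hmem this
    exact hP2.ne_top ((Ideal.eq_top_iff_one _).mpr h1)
  have hx0πP2 : x0 + π ∈ P2 := Ideal.add_mem _ hx0P2 hπP2
  by_cases hσ1 : x0 ^ 2 + y0 ^ 2 + 1 ∈ P1 ^ 2
  · -- use σ2
    refine ⟨(x0 + π) ^ 2 + y0 ^ 2 + 1, isSumSq_aux _ _, hσ2P1, ?_, hnotP2 _ hx0πP2⟩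
    intro hσ2
    -- difference π * (2 x0 + π) ∈ P1²  : contradiction
    have hδ : ((x0 + π) ^ 2 + y0 ^ 2 + 1) - (x0 ^ 2 + y0 ^ 2 + 1) = π * (2 * x0 + π) := by ring
    have hδmem : π * (2 * x0 + π) ∈ P1 ^ 2 := hδ ▸ Ideal.sub_mem _ hσ2 hσ1
    have hwP1 : 2 * x0 + π ∉ P1 := by
      intro hmem
      have : (Ideal.Quotient.mk P1) (2 * x0 + π) = 0 := Ideal.Quotient.eq_zero_iff_mem.mpr hmem
      rw [map_add, map_mul, hmkx0, hmkπ, add_zero] at this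
      exact mul_ne_zero h2κ hα this
    -- count: ν(π (2x0+π)) = 1 but P1² divides it
    have hπ0' : π ≠ 0 := fun h => hπsq (h ▸ zero_mem _)
    have hw0 : 2 * x0 + π ≠ 0 := fun h => hwP1 (h ▸ zero_mem _)
    have hP1prime : Prime P1 := (Ideal.prime_iff_isPrime hP1b).mpr hP1.isPrime
    have hcount : Multiset.count P1 (normalizedFactors (Ideal.span {π * (2 * x0 + π)})) = 1 := by
      have h1 : Multiset.count P1 (normalizedFactors (Ideal.span {π})) = 1 := by
        refine Ideal.count_normalizedFactors_eq (p := P1) ?_ ?_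
        · rwa [pow_one, Ideal.span_singleton_le_iff_mem]
        · rwa [Ideal.span_singleton_le_iff_mem]
      have h0 : Multiset.count P1 (normalizedFactors (Ideal.span {2 * x0 + π})) = 0 := by
        refine Ideal.count_normalizedFactors_eq (p := P1) ?_ ?_
        · rw [pow_zero, Ideal.one_eq_top]; exact le_top
        · rwa [pow_one, Ideal.span_singleton_le_iff_mem]
      rw [nu_mul' P1 hπ0' hw0, h1, h0]
    have hdvd : P1 ^ 2 ∣ Ideal.span {π * (2 * x0 + π)} := by
      rw [Ideal.dvd_iff_le]
      rwa [Ideal.span_singleton_le_iff_mem]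
    have hspan0 : Ideal.span {π * (2 * x0 + π)} ≠ 0 := by
      rw [Ne, Ideal.zero_eq_bot, Ideal.span_singleton_eq_bot]
      exact mul_ne_zero hπ0' hw0
    have hP1sq0 : P1 ^ 2 ≠ 0 := pow_ne_zero _ hP1prime.ne_zero
    have hle := (dvd_iff_normalizedFactors_le_normalizedFactors hP1sq0 hspan0).mp hdvd
    have h2le := Multiset.le_iff_count.mp hle P1
    rw [hcount] at h2le
    have : normalizedFactors (P1 ^ 2) = {P1} + {P1} := by
      rw [sq, normalizedFactors_mul hP1prime.ne_zero hP1prime.ne_zero,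
        normalizedFactors_irreducible hP1prime.irreducible, normalize_eq]
    rw [this] at h2le
    simp at h2le
  · exact ⟨x0 ^ 2 + y0 ^ 2 + 1, isSumSq_aux _ _, hσ1P1, hσ1, hnotP2 _ hx0P2⟩


end MainB

section MainC

variable {E : Type} [Field E] [NumberField E]

lemma eval_dvd_aux (F : (𝓞 E)[X]) (t : 𝓞 E) :
    (F.coeff 0 * t) ∣ (F.eval (F.coeff 0 * t) - F.coeff 0) := by
  set c := F.coeff 0
  have hev : F.eval (c * t) = ∑ i ∈ Finset.range (F.natDegree + 1), F.coeff i * (c * t) ^ i :=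
    F.eval_eq_sum_range (c * t)
  have hsplit : ∑ i ∈ Finset.range (F.natDegree + 1), F.coeff i * (c * t) ^ i =
      (∑ i ∈ Finset.range F.natDegree, F.coeff (i + 1) * (c * t) ^ (i + 1)) + c := by
    rw [Finset.sum_range_succ']
    simp [c]
  rw [hev, hsplit, add_sub_cancel_right]
  refine Finset.dvd_sum ?_
  intro i _
  exact Dvd.dvd.mul_left (dvd_pow_self (c * t) (Nat.succ_ne_zero i)) _

lemma exists_good_prime (F : (𝓞 E)[X]) (hmon : F.Monic) (hdeg : 1 ≤ F.natDegree)
    (hc : F.coeff 0 ≠ 0) (W : 𝓞 E) (hW : W ≠ 0) :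
    ∃ (q : Ideal (𝓞 E)) (ρ : 𝓞 E), q.IsMaximal ∧ q ≠ ⊥ ∧ W ∉ q ∧ F.eval ρ ∈ q := by
  classical
  set c := F.coeff 0 with hcdef
  set φ := algebraMap (𝓞 E) E with hφdef
  have hφinj : Function.Injective φ := RingOfIntegers.coe_injective
  set u : E := φ c * φ W with hu
  have hu0 : u ≠ 0 := mul_ne_zero (fun h => hc (hφinj (by simpa using h)))
    (fun h => hW (hφinj (by simpa using h)))
  have hφc0 : φ c ≠ 0 := fun h => hc (hφinj (by simpa using h))
  set G : E[X] := Polynomial.C (φ c)⁻¹ * ((F.map φ).comp (Polynomial.C u * Polynomial.X))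
    with hGdef
  -- degree of G
  have hFm : (F.map φ).natDegree = F.natDegree := hmon.natDegree_map φ
  have hGdeg : G.natDegree = F.natDegree := by
    rw [hGdef, Polynomial.natDegree_C_mul (inv_ne_zero hφc0), Polynomial.natDegree_comp,
      Polynomial.natDegree_C_mul_X u hu0, hFm, mul_one]
  have hG0 : G ≠ 0 := by
    intro h
    rw [h] at hGdeg
    simp at hGdeg
    omega
  -- the complex polynomial
  set H : Polynomial ℂ := ∏ τ : E →ₐ[ℚ] ℂ, G.map (τ : E →+* ℂ) with hHdef
  have hHfac0 : ∀ τ : E →ₐ[ℚ] ℂ, G.map (τ : E →+* ℂ) ≠ 0 := by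
    intro τ
    exact Polynomial.map_ne_zero hG0
  have hH0 : H ≠ 0 := Finset.prod_ne_zero_iff.mpr fun τ _ => hHfac0 τ
  have hHdeg : 1 ≤ H.natDegree := by
    rw [hHdef, Polynomial.natDegree_prod _ _ (fun τ _ => hHfac0 τ)]
    have hcard : 0 < Fintype.card (E →ₐ[ℚ] ℂ) := by
      rw [AlgHom.card]
      exact Module.finrank_pos
    obtain ⟨τ⟩ := Fintype.card_pos_iff.mp hcard
    have : (G.map (τ : E →+* ℂ)).natDegree = G.natDegree :=
      Polynomial.natDegree_map_eq_of_injective (τ : E →+* ℂ).injective G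
    calc 1 ≤ (G.map (τ : E →+* ℂ)).natDegree := by rw [this, hGdeg]; omega
      _ ≤ _ := Finset.single_le_sum (f := fun τ : E →ₐ[ℚ] ℂ => (G.map (τ : E →+* ℂ)).natDegree)
          (fun _ _ => Nat.zero_le _) (Finset.mem_univ τ)
  -- norm identity
  have hnorm : ∀ y : E, algebraMap ℚ ℂ (Algebra.norm ℚ y) = ∏ τ : E →ₐ[ℚ] ℂ, τ y :=
    fun y => Algebra.norm_eq_prod_embeddings ℚ ℂ y
  have hHeval : ∀ k : ℕ, H.eval ((k : ℂ)) = algebraMap ℚ ℂ (Algebra.norm ℚ (G.eval (k : E))) := by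
    intro k
    rw [hnorm, hHdef, Polynomial.eval_prod]
    refine Finset.prod_congr rfl ?_
    intro τ _
    have : ((k : ℂ)) = (τ : E →+* ℂ) ((k : E)) := by simp
    rw [this, Polynomial.eval_map, Polynomial.eval₂_at_apply]
    rfl
  -- finitely many bad k
  have hbad : ∀ v : ℂ, {k : ℕ | H.eval (k : ℂ) = v}.Finite := by
    intro v
    have hHv : H - Polynomial.C v ≠ 0 := by
      intro h
      have : H = Polynomial.C v := by linear_combination (norm := ring_nf) h
      rw [this, Polynomial.natDegree_C] at hHdeg
      omega
    have hroots : {z : ℂ | (H - Polynomial.C v).IsRoot z}.Finite := by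
      refine Set.Finite.subset (H - Polynomial.C v).roots.toFinset.finite_toSet ?_
      intro z hz
      rw [Finset.mem_coe, Multiset.mem_toFinset, Polynomial.mem_roots hHv]
      exact hz
    have : {k : ℕ | H.eval (k : ℂ) = v} =
        (fun k : ℕ => (k : ℂ)) ⁻¹' {z : ℂ | (H - Polynomial.C v).IsRoot z} := by
      ext k
      simp [Polynomial.IsRoot, sub_eq_zero]
    rw [this]
    exact Set.Finite.preimage (Set.injOn_of_injective Nat.cast_injective) hroots
  -- choose a good k
  have hfin : ({k : ℕ | H.eval (k : ℂ) = 0} ∪ ({k : ℕ | H.eval (k : ℂ) = 1} ∪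
      {k : ℕ | H.eval (k : ℂ) = -1})).Finite := ((hbad 0).union ((hbad 1).union (hbad (-1))))
  obtain ⟨k, hk⟩ := (Set.Finite.infinite_compl hfin).nonempty
  simp only [Set.mem_compl_iff, Set.mem_union, Set.mem_setOf_eq, not_or] at hk
  obtain ⟨hk0, hk1, hkm1⟩ := hk
  -- construct g
  set t : 𝓞 E := W * (k : 𝓞 E) with htdef
  obtain ⟨h, hh⟩ := eval_dvd_aux F t
  set g : 𝓞 E := 1 + t * h with hgdef
  have hcg : c * g = F.eval (c * t) := by
    rw [hgdef]
    have : F.eval (c * t) = c + (c * t) * h := by rw [← hh]; ring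
    rw [this]
    ring
  -- value of N(g)
  have hφk : φ ((k : 𝓞 E)) = (k : E) := map_natCast φ k
  have hGg : G.eval ((k : E)) = φ g := by
    have h1 : φ c * φ g = (F.map φ).eval (u * (k : E)) := by
      have : u * (k : E) = φ (c * t) := by
        rw [htdef, hu]
        push_cast [map_mul, hφk]
        ring
      rw [this, Polynomial.eval_map, Polynomial.eval₂_at_apply, ← map_mul, hcg]
    rw [hGdef]
    simp only [Polynomial.eval_mul, Polynomial.eval_C, Polynomial.eval_comp,
      Polynomial.eval_mul, Polynomial.eval_C, Polynomial.eval_X]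
    rw [← h1]
    field_simp
  have hNg : algebraMap ℚ ℂ (Algebra.norm ℚ (φ g)) = H.eval ((k : ℂ)) := by
    rw [hHeval k, hGg]
  -- g is a nonzero nonunit
  have hg0 : g ≠ 0 := by
    intro hzero
    rw [hzero] at hNg
    rw [map_zero, Algebra.norm_zero, map_zero] at hNg
    exact hk0 hNg.symm
  have hgnu : ¬ IsUnit g := by
    intro hunit
    have habs : |(RingOfIntegers.norm ℚ g : ℚ)| = 1 := NumberField.isUnit_iff_norm.mp hunit
    rw [RingOfIntegers.coe_norm] at habs
    have : Algebra.norm ℚ (φ g) = 1 ∨ Algebra.norm ℚ (φ g) = -1 := by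
      rcases (abs_eq (le_of_lt one_pos)).mp habs with h' | h'
      · exact Or.inl h'
      · exact Or.inr h'
    rcases this with h' | h'
    · rw [h', map_one] at hNg
      exact hk1 hNg.symm
    · rw [h', map_neg, map_one] at hNg
      exact hkm1 hNg.symm
  -- take a maximal ideal containing g
  have hspan : Ideal.span {g} ≠ ⊤ := by
    rwa [Ne, Ideal.span_singleton_eq_top]
  obtain ⟨q, hqmax, hqle⟩ := Ideal.exists_le_maximal _ hspan
  have hgq : g ∈ q := hqle (Ideal.subset_span (Set.mem_singleton g))
  refine ⟨q, c * t, hqmax, ?_, ?_, ?_⟩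
  · intro hbot
    rw [hbot] at hgq
    exact hg0 (Ideal.mem_bot.mp hgq)
  · intro hWq
    have htq : t ∈ q := htdef ▸ Ideal.mul_mem_right _ _ hWq
    have h1q : (1 : 𝓞 E) ∈ q := by
      have : g - t * h ∈ q := Ideal.sub_mem _ hgq (Ideal.mul_mem_right _ _ htq)
      simpa [hgdef] using this
    exact hqmax.ne_top ((Ideal.eq_top_iff_one _).mpr h1q)
  · rw [← hcg]
    exact Ideal.mul_mem_left _ _ hgq


end MainC

section MainD

variable {E K : Type} [Field E] [NumberField E] [Field K] [NumberField K] [Algebra E K]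

open KummerDedekind in
open Classical in
lemma two_primes {q : Ideal (𝓞 E)} (hq : q.IsMaximal) (hqb : q ≠ ⊥)
    (x : 𝓞 K) (hxint : IsIntegral (𝓞 E) x)
    (hcond : (conductor (𝓞 E) x).comap (algebraMap (𝓞 E) (𝓞 K)) ⊔ q = ⊤)
    (hdeg : 2 ≤ (minpoly (𝓞 E) x).natDegree)
    (A B : (𝓞 E)[X]) (r : 𝓞 E) (hr : r ∉ q)
    (hsep : A * (minpoly (𝓞 E) x) + B * derivative (minpoly (𝓞 E) x) = Polynomial.C r)
    (ρ : 𝓞 E) (hρq : (minpoly (𝓞 E) x).eval ρ ∈ q) :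
    ∃ P1 P2 : Ideal (𝓞 K), P1.IsMaximal ∧ P2.IsMaximal ∧ P1 ≠ ⊥ ∧ P2 ≠ ⊥ ∧ P1 ≠ P2 ∧
      Ideal.comap (algebraMap (𝓞 E) (𝓞 K)) P1 = q ∧
      Ideal.comap (algebraMap (𝓞 E) (𝓞 K)) P2 = q ∧
      Multiset.count P1 (normalizedFactors (q.map (algebraMap (𝓞 E) (𝓞 K)))) = 1 ∧
      Multiset.count P2 (normalizedFactors (q.map (algebraMap (𝓞 E) (𝓞 K)))) = 1 := by
  letI : Field ((𝓞 E) ⧸ q) := Ideal.Quotient.field q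
  set F := minpoly (𝓞 E) x with hFdef
  have hmon : F.Monic := minpoly.monic hxint
  set mk := Ideal.Quotient.mk q with hmk
  set f : Polynomial ((𝓞 E) ⧸ q) := F.map mk with hf
  have hfmon : f.Monic := hmon.map mk
  have hf0 : f ≠ 0 := hfmon.ne_zero
  have hfdeg : f.natDegree = F.natDegree := hmon.natDegree_map mk
  have hrbar : mk r ≠ 0 := by
    rw [Ne, Ideal.Quotient.eq_zero_iff_mem]
    exact hr
  have hsepbar : (A.map mk) * f + (B.map mk) * derivative f = Polynomial.C (mk r) := by
    rw [hf, derivative_map, ← Polynomial.map_mul, ← Polynomial.map_mul, ← Polynomial.map_add,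
      hsep, Polynomial.map_C]
  have hcop : IsCoprime f (derivative f) := by
    refine ⟨Polynomial.C (mk r)⁻¹ * A.map mk, Polynomial.C (mk r)⁻¹ * B.map mk, ?_⟩
    have h2 : Polynomial.C (mk r)⁻¹ * ((A.map mk) * f + (B.map mk) * derivative f) =
        Polynomial.C (mk r)⁻¹ * Polynomial.C (mk r) := by rw [hsepbar]
    rw [← Polynomial.C_mul, inv_mul_cancel₀ hrbar, Polynomial.C_1] at h2
    rw [← h2]
    ring
  have hsq : Squarefree f := (show f.Separable from hcop).squarefree
  have hroot : f.IsRoot (mk ρ) := by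
    rw [hf, Polynomial.IsRoot, Polynomial.eval_map, Polynomial.eval₂_at_apply]
    rw [Ideal.Quotient.eq_zero_iff_mem]
    exact hρq
  obtain ⟨h1, hfeq⟩ := Polynomial.dvd_iff_isRoot.mpr hroot
  have hXC0 : (X - Polynomial.C (mk ρ)) ≠ 0 := X_sub_C_ne_zero _
  have hh10 : h1 ≠ 0 := by
    intro hzero
    rw [hzero, mul_zero] at hfeq
    exact hf0 hfeq
  have hh1deg : 1 ≤ h1.natDegree := by
    have hdd := hfeq ▸ hfdeg
    rw [Polynomial.natDegree_mul hXC0 hh10, Polynomial.natDegree_X_sub_C] at hdd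
    omega
  have hh1nu : ¬ IsUnit h1 := by
    intro hunit
    have := Polynomial.natDegree_eq_zero_of_isUnit hunit
    omega
  obtain ⟨p2, hp2irr, hp2dvd⟩ := WfDvdMonoid.exists_irreducible_factor hh1nu hh10
  have hh1f : h1 ∣ f := Dvd.intro_left _ hfeq.symm
  obtain ⟨g1, h1m, hg1assoc⟩ :=
    exists_mem_normalizedFactors_of_dvd hf0 (Polynomial.irreducible_X_sub_C (mk ρ))
      (Polynomial.dvd_iff_isRoot.mpr hroot)
  obtain ⟨g2, h2m, hg2assoc⟩ :=
    exists_mem_normalizedFactors_of_dvd hf0 hp2irr (hp2dvd.trans hh1f)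
  have hnodup := (squarefree_iff_nodup_normalizedFactors hf0).mp hsq
  have hne : g1 ≠ g2 := by
    intro heq
    have hassoc : Associated (X - Polynomial.C (mk ρ)) p2 :=
      hg1assoc.trans (heq ▸ hg2assoc.symm)
    have hXp2 : (X - Polynomial.C (mk ρ)) ∣ h1 := hassoc.dvd.trans hp2dvd
    have hsqdvd : (X - Polynomial.C (mk ρ)) * (X - Polynomial.C (mk ρ)) ∣ f := by
      rw [hfeq]
      exact mul_dvd_mul_left _ hXp2
    exact (Polynomial.not_isUnit_X_sub_C (mk ρ)) (hsq _ hsqdvd)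
  have hc1 : Multiset.count g1 (normalizedFactors f) = 1 :=
    Multiset.count_eq_one_of_mem hnodup h1m
  have hc2 : Multiset.count g2 (normalizedFactors f) = 1 :=
    Multiset.count_eq_one_of_mem hnodup h2m
  -- Kummer-Dedekind
  set e := normalizedFactorsMapEquivNormalizedFactorsMinPolyMk hq hqb hcond hxint with he
  set P1 : Ideal (𝓞 K) := ↑(e.symm ⟨g1, h1m⟩) with hP1def
  set P2 : Ideal (𝓞 K) := ↑(e.symm ⟨g2, h2m⟩) with hP2def
  have hP1mem : P1 ∈ normalizedFactors (q.map (algebraMap (𝓞 E) (𝓞 K))) :=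
    (e.symm ⟨g1, h1m⟩).prop
  have hP2mem : P2 ∈ normalizedFactors (q.map (algebraMap (𝓞 E) (𝓞 K))) :=
    (e.symm ⟨g2, h2m⟩).prop
  have hmapq0 : q.map (algebraMap (𝓞 E) (𝓞 K)) ≠ 0 := fun hh =>
    hqb ((Ideal.map_eq_bot_iff_of_injective
      (FaithfulSMul.algebraMap_injective (𝓞 E) (𝓞 K))).mp
        (by rwa [Ideal.zero_eq_bot] at hh))
  have hPne : P1 ≠ P2 := by
    intro heq
    apply hne
    have h3 : e.symm ⟨g1, h1m⟩ = e.symm ⟨g2, h2m⟩ := Subtype.ext heq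
    have h4 := e.symm.injective h3
    exact congrArg Subtype.val h4
  have hcount : ∀ (P : Ideal (𝓞 K)) (g : Polynomial ((𝓞 E) ⧸ q))
      (hgm : g ∈ normalizedFactors f)
      (hPm : P ∈ normalizedFactors (q.map (algebraMap (𝓞 E) (𝓞 K)))),
      P = ↑(e.symm ⟨g, hgm⟩) →
      Multiset.count g (normalizedFactors f) = 1 →
      Multiset.count P (normalizedFactors (q.map (algebraMap (𝓞 E) (𝓞 K)))) = 1 := by
    intro P g hgm hPm hPg hcg
    have hmult := emultiplicity_factors_map_eq_emultiplicity hq hqb hcond hxint hPm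
    have heqv : e ⟨P, hPm⟩ = ⟨g, hgm⟩ := by
      have h5 : (⟨P, hPm⟩ : {J : Ideal (𝓞 K) |
          J ∈ normalizedFactors (q.map (algebraMap (𝓞 E) (𝓞 K)))}) = e.symm ⟨g, hgm⟩ :=
        Subtype.ext hPg
      rw [h5, Equiv.apply_symm_apply]
    rw [heqv] at hmult
    have hPirr : Irreducible P := irreducible_of_normalized_factor _ hPm
    have hgirr : Irreducible g := irreducible_of_normalized_factor _ hgm
    rw [emultiplicity_eq_count_normalizedFactors hPirr hmapq0,
      emultiplicity_eq_count_normalizedFactors hgirr hf0,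
      normalize_eq, normalize_normalized_factor _ hgm, Nat.cast_inj] at hmult
    rw [hmult, hcg]
  have hcnt1 := hcount P1 g1 h1m hP1mem rfl hc1
  have hcnt2 := hcount P2 g2 h2m hP2mem rfl hc2
  have hfacts : ∀ (P : Ideal (𝓞 K)),
      P ∈ normalizedFactors (q.map (algebraMap (𝓞 E) (𝓞 K))) →
      P.IsMaximal ∧ P ≠ ⊥ ∧ Ideal.comap (algebraMap (𝓞 E) (𝓞 K)) P = q := by
    intro P hPm
    have hPprime : Prime P := prime_of_normalized_factor _ hPm
    have hPb : P ≠ ⊥ := hPprime.ne_zero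
    have hPisprime : P.IsPrime := (Ideal.prime_iff_isPrime hPb).mp hPprime
    have hPmax : P.IsMaximal := hPisprime.isMaximal hPb
    refine ⟨hPmax, hPb, ?_⟩
    have hle : q.map (algebraMap (𝓞 E) (𝓞 K)) ≤ P :=
      Ideal.le_of_dvd (dvd_of_mem_normalizedFactors hPm)
    have hqle : q ≤ Ideal.comap (algebraMap (𝓞 E) (𝓞 K)) P :=
      Ideal.map_le_iff_le_comap.mp hle
    haveI := hPisprime
    have hcomapprime : (Ideal.comap (algebraMap (𝓞 E) (𝓞 K)) P).IsPrime :=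
      Ideal.IsPrime.comap _
    exact (hq.eq_of_le hcomapprime.ne_top hqle).symm
  obtain ⟨h1max, h1b, h1comap⟩ := hfacts P1 hP1mem
  obtain ⟨h2max, h2b, h2comap⟩ := hfacts P2 hP2mem
  exact ⟨P1, P2, h1max, h2max, h1b, h2b, hPne, h1comap, h2comap, hcnt1, hcnt2⟩


end MainD

section MainE

variable {E K : Type} [Field E] [NumberField E] [Field K] [NumberField K] [Algebra E K]
  [IsScalarTower ℚ E K]

lemma exists_primitive (hdeg : 1 < Module.finrank E K) :
    ∃ x : 𝓞 K, IsIntegral (𝓞 E) x ∧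
      IntermediateField.adjoin E {(algebraMap (𝓞 K) K x)} = ⊤ ∧
      2 ≤ (minpoly (𝓞 E) x).natDegree ∧ (minpoly (𝓞 E) x).coeff 0 ≠ 0 ∧
      (minpoly (𝓞 E) x).map (algebraMap (𝓞 E) E) = minpoly E (algebraMap (𝓞 K) K x) := by
  haveI : FiniteDimensional E K := Module.Finite.right ℚ E K
  obtain ⟨θ, hθ⟩ := Field.exists_primitive_element E K
  have halg : IsAlgebraic ℤ θ := by
    have h1 : IsAlgebraic ℚ θ := (Algebra.IsAlgebraic.isAlgebraic θ)
    obtain ⟨p, hp0, hpθ⟩ := h1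
    obtain ⟨c, hc⟩ := IsLocalization.integerNormalization_map_to_map (nonZeroDivisors ℤ) p
    refine ⟨IsLocalization.integerNormalization (nonZeroDivisors ℤ) p, ?_, ?_⟩
    · intro hz
      rw [hz, Polynomial.map_zero] at hc
      have hc0 : (c : ℤ) ≠ 0 := nonZeroDivisors.coe_ne_zero c
      have := (smul_eq_zero.mp hc.symm).resolve_left (by exact_mod_cast hc0)
      exact hp0 this
    · have := congrArg (Polynomial.aeval θ) hc
      rw [Polynomial.aeval_map_algebraMap] at this
      rw [this, map_zsmul, hpθ, smul_zero]
  obtain ⟨y, hy0, hyint⟩ := halg.exists_integral_multiple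
  set ξ : 𝓞 K := ⟨algebraMap ℤ K y * θ, by rw [← Algebra.smul_def]; exact hyint⟩ with hξdef
  have hξK : algebraMap (𝓞 K) K ξ = algebraMap ℤ K y * θ := rfl
  have hyE : ((y : ℤ) : E) ≠ 0 := Int.cast_ne_zero.mpr hy0
  -- adjoin is everything
  have hadj : IntermediateField.adjoin E {(algebraMap (𝓞 K) K ξ)} = ⊤ := by
    rw [eq_top_iff, ← hθ]
    rw [IntermediateField.adjoin_le_iff, Set.singleton_subset_iff]
    have hmem : algebraMap (𝓞 K) K ξ ∈ IntermediateField.adjoin E {(algebraMap (𝓞 K) K ξ)} :=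
      IntermediateField.mem_adjoin_simple_self E _
    have h2 : θ = algebraMap E K ((y : E))⁻¹ * (algebraMap (𝓞 K) K ξ) := by
      rw [hξK]
      have : algebraMap ℤ K y = algebraMap E K ((y : ℤ) : E) := by
        rw [eq_intCast (algebraMap ℤ K) y, map_intCast]
      rw [this, ← mul_assoc, ← map_mul, inv_mul_cancel₀ hyE, map_one, one_mul]
    rw [SetLike.mem_coe, h2]
    exact mul_mem (IntermediateField.algebraMap_mem _ _) hmem
  -- integrality
  have hint : IsIntegral (𝓞 E) ξ := (RingOfIntegers.isIntegral ξ).tower_top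
  -- minpoly relation
  have hmap : (minpoly (𝓞 E) ξ).map (algebraMap (𝓞 E) E) = minpoly E (algebraMap (𝓞 K) K ξ) :=
    (minpoly.isIntegrallyClosed_eq_field_fractions E K hint).symm
  -- degree
  have hintE : IsIntegral E (algebraMap (𝓞 K) K ξ) := IsIntegral.of_finite E _
  have hdegE : (minpoly E (algebraMap (𝓞 K) K ξ)).natDegree = Module.finrank E K := by
    rw [← IntermediateField.adjoin.finrank hintE, hadj, IntermediateField.finrank_top']
  have hndeg : (minpoly (𝓞 E) ξ).natDegree = Module.finrank E K := by
    have := congrArg Polynomial.natDegree hmap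
    rwa [(minpoly.monic hint).natDegree_map, hdegE] at this
  have hge2 : 2 ≤ (minpoly (𝓞 E) ξ).natDegree := by omega
  -- coeff 0 ≠ 0
  have hc0 : (minpoly (𝓞 E) ξ).coeff 0 ≠ 0 := by
    intro hc
    have hcE : (minpoly E (algebraMap (𝓞 K) K ξ)).coeff 0 = 0 := by
      rw [← hmap, Polynomial.coeff_map, hc, map_zero]
    have hXdvd : X ∣ minpoly E (algebraMap (𝓞 K) K ξ) := Polynomial.X_dvd_iff.mpr hcE
    obtain ⟨dd, hdd⟩ := hXdvd
    have hirr : Irreducible (minpoly E (algebraMap (𝓞 K) K ξ)) := minpoly.irreducible hintE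
    rcases hirr.isUnit_or_isUnit hdd with hu | hu
    · exact Polynomial.not_isUnit_X hu
    · have hd0 : dd ≠ 0 := by
        intro hz
        rw [hz, mul_zero] at hdd
        exact (minpoly.ne_zero hintE) hdd
      have := congrArg Polynomial.natDegree hdd
      rw [Polynomial.natDegree_mul Polynomial.X_ne_zero hd0, Polynomial.natDegree_X,
        Polynomial.natDegree_eq_zero_of_isUnit hu, hdegE] at this
      omega
  exact ⟨ξ, hint, hadj, hge2, hc0, hmap⟩

lemma exists_conductor_elem (x : 𝓞 K)
    (hadj : IntermediateField.adjoin E {(algebraMap (𝓞 K) K x)} = ⊤) :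
    ∃ d : 𝓞 E, d ≠ 0 ∧ algebraMap (𝓞 E) (𝓞 K) d ∈ conductor (𝓞 E) x := by
  classical
  haveI : FiniteDimensional E K := Module.Finite.right ℚ E K
  haveI : Module.Finite (𝓞 E) (𝓞 K) := Module.Finite.of_restrictScalars_finite ℤ _ _
  set ξK := algebraMap (𝓞 K) K x with hξK
  have hintE : IsIntegral E ξK := IsIntegral.of_finite E _
  have hsub : Algebra.adjoin E {ξK} = ⊤ := by
    rw [← IntermediateField.adjoin_simple_toSubalgebra_of_isAlgebraic hintE.isAlgebraic, hadj]
    exact IntermediateField.top_toSubalgebra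
  have hstep : ∀ s : 𝓞 K, ∃ b : 𝓞 E, b ≠ 0 ∧
      algebraMap (𝓞 E) (𝓞 K) b * s ∈ Algebra.adjoin (𝓞 E) {x} := by
    intro s
    have hsmem : algebraMap (𝓞 K) K s ∈ Algebra.adjoin E {ξK} := by
      rw [hsub]; exact Algebra.mem_top
    rw [Algebra.adjoin_singleton_eq_range_aeval, AlgHom.mem_range] at hsmem
    obtain ⟨p, hp⟩ := hsmem
    obtain ⟨b, hb⟩ := IsLocalization.integerNormalization_map_to_map
      (nonZeroDivisors (𝓞 E)) p
    refine ⟨(b : 𝓞 E), nonZeroDivisors.coe_ne_zero b, ?_⟩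
    have hQmem : Polynomial.aeval x (IsLocalization.integerNormalization
        (nonZeroDivisors (𝓞 E)) p) ∈ Algebra.adjoin (𝓞 E) {x} := by
      rw [Algebra.adjoin_singleton_eq_range_aeval, AlgHom.mem_range]
      exact ⟨_, rfl⟩
    have hcoe : algebraMap (𝓞 K) K (algebraMap (𝓞 E) (𝓞 K) (b : 𝓞 E) * s) =
        algebraMap (𝓞 K) K (Polynomial.aeval x (IsLocalization.integerNormalization
          (nonZeroDivisors (𝓞 E)) p)) := by
      have h1 : algebraMap (𝓞 K) K (Polynomial.aeval x (IsLocalization.integerNormalization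
          (nonZeroDivisors (𝓞 E)) p)) = Polynomial.aeval ξK (IsLocalization.integerNormalization
          (nonZeroDivisors (𝓞 E)) p) := by
        rw [hξK]
        exact (Polynomial.aeval_algHom_apply (IsScalarTower.toAlgHom (𝓞 E) (𝓞 K) K) x _).symm
      have h2 : (Polynomial.aeval ξK (IsLocalization.integerNormalization
          (nonZeroDivisors (𝓞 E)) p) : K) = Polynomial.aeval ξK ((IsLocalization.integerNormalization
          (nonZeroDivisors (𝓞 E)) p).map (algebraMap (𝓞 E) E)) := by
        rw [Polynomial.aeval_map_algebraMap]
      have h3 : ((IsLocalization.integerNormalization (nonZeroDivisors (𝓞 E)) p).map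
          (algebraMap (𝓞 E) E)) = Polynomial.C (algebraMap (𝓞 E) E (b : 𝓞 E)) * p := by
        rw [hb, ← algebraMap_smul E ((b : 𝓞 E)) p, Polynomial.smul_eq_C_mul]
      have h4 : algebraMap (𝓞 K) K (algebraMap (𝓞 E) (𝓞 K) (b : 𝓞 E)) =
          algebraMap E K (algebraMap (𝓞 E) E (b : 𝓞 E)) := by
        rw [← IsScalarTower.algebraMap_apply, ← IsScalarTower.algebraMap_apply]
      rw [h1, h2, h3]
      rw [map_mul (Polynomial.aeval ξK), Polynomial.aeval_C, hp, map_mul, h4]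
    have := RingOfIntegers.coe_injective hcoe
    rw [this]
    exact hQmem
  choose B hB0 hBmem using hstep
  obtain ⟨T, hT⟩ := Module.Finite.fg_top (R := 𝓞 E) (M := 𝓞 K)
  refine ⟨∏ s ∈ T, B s, Finset.prod_ne_zero_iff.mpr fun s _ => hB0 s, ?_⟩
  rw [mem_conductor_iff]
  intro z
  -- membership submodule trick
  set Z : Submodule (𝓞 E) (𝓞 K) :=
    { carrier := {y | algebraMap (𝓞 E) (𝓞 K) (∏ s ∈ T, B s) * y ∈ Algebra.adjoin (𝓞 E) {x}}
      add_mem' := by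
        intro a b ha hb
        simp only [Set.mem_setOf_eq, mul_add] at *
        exact add_mem ha hb
      zero_mem' := by
        simp only [Set.mem_setOf_eq, mul_zero]
        exact zero_mem _
      smul_mem' := by
        intro c y hy
        show algebraMap (𝓞 E) (𝓞 K) (∏ s ∈ T, B s) * (c • y) ∈ Algebra.adjoin (𝓞 E) {x}
        have hcc : algebraMap (𝓞 E) (𝓞 K) (∏ s ∈ T, B s) * (c • y) =
            algebraMap (𝓞 E) (𝓞 K) c * (algebraMap (𝓞 E) (𝓞 K) (∏ s ∈ T, B s) * y) := by
          rw [Algebra.smul_def]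
          ring
        rw [hcc]
        exact mul_mem (Subalgebra.algebraMap_mem _ c) hy } with hZ
  have hTZ : (T : Set (𝓞 K)) ⊆ Z := by
    intro s hs
    show algebraMap (𝓞 E) (𝓞 K) (∏ t ∈ T, B t) * s ∈ Algebra.adjoin (𝓞 E) {x}
    have hfac : algebraMap (𝓞 E) (𝓞 K) (∏ t ∈ T, B t) * s =
        algebraMap (𝓞 E) (𝓞 K) (∏ t ∈ T.erase s, B t) *
          (algebraMap (𝓞 E) (𝓞 K) (B s) * s) := by
      rw [← Finset.mul_prod_erase T B hs, map_mul]
      ring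
    rw [hfac]
    exact mul_mem (Subalgebra.algebraMap_mem _ _) (hBmem s)
  have hZtop : (⊤ : Submodule (𝓞 E) (𝓞 K)) ≤ Z := by
    rw [← hT]
    exact Submodule.span_le.mpr hTZ
  exact hZtop (Submodule.mem_top) 

lemma exists_sep_witness (x : 𝓞 K) (hint : IsIntegral (𝓞 E) x)
    (hmap : (minpoly (𝓞 E) x).map (algebraMap (𝓞 E) E) = minpoly E (algebraMap (𝓞 K) K x)) :
    ∃ (A B : (𝓞 E)[X]) (r : 𝓞 E), r ≠ 0 ∧
      A * (minpoly (𝓞 E) x) + B * derivative (minpoly (𝓞 E) x) = Polynomial.C r := by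
  haveI : FiniteDimensional E K := Module.Finite.right ℚ E K
  set ξK := algebraMap (𝓞 K) K x with hξK
  have hsep : (minpoly E ξK).Separable := Algebra.IsSeparable.isSeparable E ξK
  obtain ⟨a, b, hab⟩ := hsep
  obtain ⟨rA, hrA⟩ := IsLocalization.integerNormalization_map_to_map (nonZeroDivisors (𝓞 E)) a
  obtain ⟨rB, hrB⟩ := IsLocalization.integerNormalization_map_to_map (nonZeroDivisors (𝓞 E)) b
  set NA := IsLocalization.integerNormalization (nonZeroDivisors (𝓞 E)) a with hNA
  set NB := IsLocalization.integerNormalization (nonZeroDivisors (𝓞 E)) b with hNB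
  refine ⟨Polynomial.C (rB : 𝓞 E) * NA, Polynomial.C (rA : 𝓞 E) * NB, (rA : 𝓞 E) * (rB : 𝓞 E),
    mul_ne_zero (nonZeroDivisors.coe_ne_zero rA) (nonZeroDivisors.coe_ne_zero rB), ?_⟩
  apply Polynomial.map_injective (algebraMap (𝓞 E) E) RingOfIntegers.coe_injective
  have hsmulA : NA.map (algebraMap (𝓞 E) E) = Polynomial.C (algebraMap (𝓞 E) E (rA : 𝓞 E)) * a := by
    rw [hrA, ← algebraMap_smul E ((rA : 𝓞 E)) a, Polynomial.smul_eq_C_mul]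
  have hsmulB : NB.map (algebraMap (𝓞 E) E) = Polynomial.C (algebraMap (𝓞 E) E (rB : 𝓞 E)) * b := by
    rw [hrB, ← algebraMap_smul E ((rB : 𝓞 E)) b, Polynomial.smul_eq_C_mul]
  rw [Polynomial.map_add, Polynomial.map_mul, Polynomial.map_mul, Polynomial.map_mul,
    Polynomial.map_mul, hsmulA, hsmulB, Polynomial.map_C, Polynomial.map_C, Polynomial.map_C,
    ← derivative_map, hmap]
  rw [map_mul]
  calc Polynomial.C (algebraMap (𝓞 E) E (rB : 𝓞 E)) *
        (Polynomial.C (algebraMap (𝓞 E) E (rA : 𝓞 E)) * a) * minpoly E ξK +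
      Polynomial.C (algebraMap (𝓞 E) E (rA : 𝓞 E)) *
        (Polynomial.C (algebraMap (𝓞 E) E (rB : 𝓞 E)) * b) * derivative (minpoly E ξK)
      = Polynomial.C (algebraMap (𝓞 E) E (rA : 𝓞 E)) *
        Polynomial.C (algebraMap (𝓞 E) E (rB : 𝓞 E)) *
        (a * minpoly E ξK + b * derivative (minpoly E ξK)) := by ring
    _ = Polynomial.C ((algebraMap (𝓞 E) E) (rA : 𝓞 E)) *
        Polynomial.C ((algebraMap (𝓞 E) E) (rB : 𝓞 E)) := by rw [hab, mul_one]
    _ = Polynomial.C ((algebraMap (𝓞 E) E) (rA : 𝓞 E) * (algebraMap (𝓞 E) E) (rB : 𝓞 E)) := by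
        rw [Polynomial.C_mul]
  


end MainE

section Final

variable {E K : Type} [Field E] [NumberField E] [Field K] [NumberField K] [Algebra E K]

theorem stmt_7_aux [IsScalarTower ℚ E K] (hdeg : 1 < Module.finrank E K) :
    ∃ σ : K, IsSumSq σ ∧ ∀ (e : E) (x : K), σ ≠ algebraMap E K e * x ^ 2 := by
  obtain ⟨x, hint, hadj, hdeg2, hc0, hmap⟩ := exists_primitive (E := E) (K := K) hdeg
  obtain ⟨d, hd0, hdcond⟩ := exists_conductor_elem x hadj
  obtain ⟨A, B, r, hr0, hsep⟩ := exists_sep_witness x hint hmap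
  set F := minpoly (𝓞 E) x with hF
  set c := F.coeff 0 with hc
  set W : 𝓞 E := 2 * d * r * c with hWdef
  have h20 : (2 : 𝓞 E) ≠ 0 := two_ne_zero
  have hW0 : W ≠ 0 := mul_ne_zero (mul_ne_zero (mul_ne_zero h20 hd0) hr0) hc0
  obtain ⟨q, ρ, hqmax, hqb, hWq, hρq⟩ :=
    exists_good_prime F (minpoly.monic hint) (by omega) hc0 W hW0
  haveI := hqmax.isPrime
  have h2q : (2 : 𝓞 E) ∉ q := by
    intro hmem
    exact hWq (hWdef ▸ Ideal.mul_mem_right _ _ (Ideal.mul_mem_right _ _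
      (Ideal.mul_mem_right _ _ hmem)))
  have hdq : d ∉ q := by
    intro hmem
    apply hWq
    have : W = d * (2 * r * c) := by rw [hWdef]; ring
    rw [this]
    exact Ideal.mul_mem_right _ _ hmem
  have hrq : r ∉ q := by
    intro hmem
    apply hWq
    have : W = r * (2 * d * c) := by rw [hWdef]; ring
    rw [this]
    exact Ideal.mul_mem_right _ _ hmem
  have hcond : (conductor (𝓞 E) x).comap (algebraMap (𝓞 E) (𝓞 K)) ⊔ q = ⊤ := by
    by_contra hne
    have hsupq := hqmax.eq_of_le hne le_sup_right
    apply hdq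
    rw [hsupq]
    exact Ideal.mem_sup_left (Ideal.mem_comap.mpr hdcond)
  obtain ⟨P1, P2, h1max, h2max, h1b, h2b, hPne, h1comap, h2comap, hcnt1, hcnt2⟩ :=
    two_primes hqmax hqb x hint hcond hdeg2 A B r hrq hsep ρ hρq
  have h2P1 : (2 : 𝓞 K) ∉ P1 := by
    intro hmem
    apply h2q
    rw [← h1comap]
    refine Ideal.mem_comap.mpr ?_
    have h22 : algebraMap (𝓞 E) (𝓞 K) 2 = (2 : 𝓞 K) := by
      rw [map_ofNat]
    rw [h22]
    exact hmem
  obtain ⟨σ, hsumsq, hσ1, hσ2, hσ3⟩ := exists_sigma h1max h2max hPne h1b h2P1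
  refine ⟨algebraMap (𝓞 K) K σ, hsumsq, ?_⟩
  intro e xx
  refine not_eq_mul_sq h1max.isPrime h2max.isPrime hσ1 hσ2 hσ3 ?_ e xx
  intro w hw
  exact count_factors_algebraMap_eq hqmax h1comap h2comap (by rw [hcnt1, hcnt2]) w hw

end Final

/-- If `K/E` is a proper finite extension of number fields, then the sums of
squares of `K` are not all contained in `E·K²`. -/
theorem stmt_7 (E K : Type) [Field E] [NumberField E] [Field K] [NumberField K]
    [Algebra E K] (hdeg : 1 < Module.finrank E K) :
    ∃ σ : K, IsSumSq σ ∧ ∀ (e : E) (x : K), σ ≠ algebraMap E K e * x ^ 2 := by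
  letI : IsScalarTower ℚ E K := IsScalarTower.of_algebraMap_eq' (Subsingleton.elim _ _)
  exact stmt_7_aux hdeg
end

section
/- Let L/K be a finite purely inseparable extension of fields of odd characteristic p. Then the pythagorean closure L_pyth equals the compositum K_pyth·L, and L_pyth/K_pyth is a finite purely inseparable extension. -/
/-- A sum of squares raised to a `p`-th-power (char `p`) is a sum of squares. -/
lemma IsSumSq.pow_charpow {R : Type*} [CommRing R] (p : ℕ) [ExpChar R p] (hp0 : p ≠ 0)
    {c : R} (h : IsSumSq c) (k : ℕ) : IsSumSq (c ^ p ^ k) := by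
  induction h with
  | zero => rw [zero_pow (pow_ne_zero k hp0)]; exact IsSumSq.zero
  | sq_add x pS ih =>
    rw [add_pow_expChar_pow, mul_pow]
    exact IsSumSq.sq_add _ ih

/-- Let `L/K` be a finite purely inseparable extension of fields of odd
characteristic `p`, embedded in an algebraic closure `Ω` of `L`.  Then the pythagorean
closure of `L` (minimal pythagorean intermediate field containing the image of `L`) equals
the compositum `K_pyth·L`, and `L_pyth/K_pyth` is finite and purely inseparable. -/
theorem stmt_19 (K L Ω : Type) [Field K] [Field L] [Field Ω]
    [Algebra K L] [Algebra L Ω] [Algebra K Ω] [IsScalarTower K L Ω]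
    [IsAlgClosure L Ω] [FiniteDimensional K L] [IsPurelyInseparable K L]
    (p : ℕ) (hp : p.Prime) (hodd : p ≠ 2) [CharP K p]
    (Kpyth : IntermediateField K Ω) (hKp : Pythagorean Kpyth)
    (hKmin : ∀ Q : IntermediateField K Ω, Pythagorean Q → Kpyth ≤ Q)
    (Lpyth : IntermediateField K Ω)
    (hLle : (IsScalarTower.toAlgHom K L Ω).fieldRange ≤ Lpyth)
    (hLp : Pythagorean Lpyth)
    (hLmin : ∀ Q : IntermediateField K Ω,
      (IsScalarTower.toAlgHom K L Ω).fieldRange ≤ Q → Pythagorean Q → Lpyth ≤ Q) :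
    Lpyth = Kpyth ⊔ (IsScalarTower.toAlgHom K L Ω).fieldRange ∧
    ∃ h : Kpyth ≤ Lpyth,
      FiniteDimensional Kpyth (IntermediateField.extendScalars h) ∧
      IsPurelyInseparable Kpyth (IntermediateField.extendScalars h) := by
  classical
  haveI := Fact.mk hp
  haveI : CharP Ω p := charP_of_injective_algebraMap (algebraMap K Ω).injective p
  haveI : CharP Kpyth p := charP_of_injective_algebraMap (algebraMap K Kpyth).injective p
  set F := (IsScalarTower.toAlgHom K L Ω).fieldRange with hF
  set M := Kpyth ⊔ F with hMdef
  haveI : CharP M p := charP_of_injective_algebraMap (algebraMap K M).injective p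
  have hp0 : p ≠ 0 := hp.ne_zero
  have hppow_ne : ∀ n : ℕ, (p : ℕ) ^ n ≠ 0 := fun n => pow_ne_zero n hp0
  -- the subfield of elements with a p-power in Kpyth
  let S : IntermediateField K Ω :=
    { carrier := {x : Ω | ∃ n : ℕ, x ^ p ^ n ∈ Kpyth}
      mul_mem' := by
        rintro a b ⟨m, hm⟩ ⟨n, hn⟩
        refine ⟨m + n, ?_⟩
        rw [mul_pow]
        have ha : a ^ p ^ (m + n) ∈ Kpyth := by
          rw [pow_add, pow_mul]; exact pow_mem hm _
        have hb : b ^ p ^ (m + n) ∈ Kpyth := by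
          rw [pow_add, mul_comm, pow_mul]; exact pow_mem hn _
        exact mul_mem ha hb
      one_mem' := ⟨0, by simpa using Kpyth.one_mem⟩
      add_mem' := by
        rintro a b ⟨m, hm⟩ ⟨n, hn⟩
        refine ⟨m + n, ?_⟩
        rw [add_pow_char_pow]
        have ha : a ^ p ^ (m + n) ∈ Kpyth := by
          rw [pow_add, pow_mul]; exact pow_mem hm _
        have hb : b ^ p ^ (m + n) ∈ Kpyth := by
          rw [pow_add, mul_comm, pow_mul]; exact pow_mem hn _
        exact add_mem ha hb
      zero_mem' := ⟨0, by simpa using Kpyth.zero_mem⟩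
      algebraMap_mem' := fun c => ⟨0, by simpa using Kpyth.algebraMap_mem c⟩
      inv_mem' := by
        rintro a ⟨n, hn⟩
        exact ⟨n, by rw [inv_pow]; exact inv_mem hn⟩ }
  have hKS : Kpyth ≤ S := fun x hx => ⟨0, by simpa using hx⟩
  have hFS : F ≤ S := by
    rintro _ ⟨y, rfl⟩
    obtain ⟨n, c, hc⟩ := IsPurelyInseparable.pow_mem K p y
    refine ⟨n, ?_⟩
    show ((IsScalarTower.toAlgHom K L Ω) y) ^ p ^ n ∈ Kpyth
    have h2 : ((IsScalarTower.toAlgHom K L Ω) y) ^ p ^ n = algebraMap K Ω c := by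
      rw [← map_pow, ← hc, IsScalarTower.coe_toAlgHom', ← IsScalarTower.algebraMap_apply]
    rw [h2]
    exact Kpyth.algebraMap_mem c
  have key : ∀ x ∈ M, ∃ n : ℕ, x ^ p ^ n ∈ Kpyth := fun x hx =>
    (sup_le hKS hFS : M ≤ S) hx
  -- M is pythagorean
  have claim : ∀ a : M, IsSumSq a → ∃ (n : ℕ) (c : Kpyth),
      IsSumSq c ∧ (c : Ω) = (a : Ω) ^ p ^ n := by
    intro a ha
    induction ha with
    | zero => exact ⟨0, 0, IsSumSq.zero, by simp⟩
    | sq_add x pT ih =>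
      obtain ⟨n₁, c, hc, hceq⟩ := ih
      obtain ⟨n₂, hx⟩ := key (x : Ω) x.2
      refine ⟨n₂ + n₁, ⟨(x : Ω) ^ p ^ (n₂ + n₁), by
          rw [pow_add, pow_mul]; exact pow_mem hx _⟩ * ⟨(x : Ω) ^ p ^ (n₂ + n₁), by
          rw [pow_add, pow_mul]; exact pow_mem hx _⟩ + c ^ p ^ n₂,
        IsSumSq.sq_add _ (hc.pow_charpow p hp0 n₂), ?_⟩
      push_cast
      rw [hceq, add_pow_char_pow, mul_pow]
      congr 1
      rw [← pow_mul, ← pow_add, Nat.add_comm n₁ n₂]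
  have hMp : Pythagorean M := by
    intro a ha
    rcases eq_or_ne a 0 with rfl | hane
    · exact ⟨0, by ring⟩
    obtain ⟨n, c, hc, hceq⟩ := claim a ha
    obtain ⟨d, hd⟩ := hKp c hc
    obtain ⟨m, hm⟩ : Odd (p ^ n) := (hp.odd_of_ne_two hodd).pow
    have hdM : (d : Ω) ∈ M := (le_sup_left : Kpyth ≤ M) d.2
    refine ⟨⟨(d : Ω), hdM⟩ / a ^ m, ?_⟩
    have ham : a ^ m ≠ 0 := pow_ne_zero m hane
    rw [div_mul_div_comm, eq_div_iff (mul_ne_zero ham ham)]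
    have h1 : a * (a ^ m * a ^ m) = a ^ p ^ n := by
      rw [hm]; ring
    rw [h1]
    apply Subtype.ext
    push_cast
    rw [← hceq, hd]
    push_cast
    ring
  -- the equality of fields
  have hle1 : Lpyth ≤ M := hLmin M le_sup_right hMp
  have hle2 : M ≤ Lpyth := sup_le (hKmin Lpyth hLp) hLle
  have hLM : Lpyth = M := le_antisymm hle1 hle2
  have h : Kpyth ≤ Lpyth := le_sup_left.trans hle2
  refine ⟨hLM, h, ?_, ?_⟩
  · -- finite dimensional
    set E := IntermediateField.extendScalars h with hE
    let b := Module.finBasis K L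
    let s : Set Ω := Set.range (fun i => algebraMap L Ω (b i))
    haveI : Finite s := Set.finite_range _
    have hsub : s ⊆ (IntermediateField.adjoin Kpyth s : IntermediateField Kpyth Ω) :=
      IntermediateField.subset_adjoin Kpyth s
    have hEeq : E = IntermediateField.adjoin Kpyth s := by
      apply le_antisymm
      · intro x hx
        have hxM : x ∈ M := hle1 hx
        have hA : M ≤ (IntermediateField.adjoin Kpyth s).restrictScalars K := by
          apply sup_le
          · intro y hy
            exact (IntermediateField.adjoin Kpyth s).algebraMap_mem ⟨y, hy⟩
          · rintro _ ⟨z, rfl⟩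
            show ((IsScalarTower.toAlgHom K L Ω) z) ∈ _
            have hz : (IsScalarTower.toAlgHom K L Ω) z =
                ∑ i, algebraMap K Ω (b.repr z i) * algebraMap L Ω (b i) := by
              conv_lhs => rw [← b.sum_repr z]
              rw [map_sum]
              refine Finset.sum_congr rfl fun i _ => ?_
              rw [map_smul, Algebra.smul_def]
              rfl
            rw [hz]
            apply sum_mem
            intro i _
            refine mul_mem ?_ (hsub ⟨i, rfl⟩)
            exact (IntermediateField.adjoin Kpyth s).algebraMap_mem
              ⟨algebraMap K Ω (b.repr z i), Kpyth.algebraMap_mem _⟩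
        exact hA hxM
      · rw [IntermediateField.adjoin_le_iff]
        intro x hxs
        obtain ⟨i, rfl⟩ := hxs
        exact hLle ⟨b i, rfl⟩
    have hint : ∀ x ∈ s, IsIntegral Kpyth x := by
      rintro _ ⟨i, rfl⟩
      have h1 : IsIntegral K (algebraMap L Ω (b i)) :=
        (Algebra.IsIntegral.isIntegral (R := K) (b i)).map (IsScalarTower.toAlgHom K L Ω)
      exact h1.tower_top
    have hfd : FiniteDimensional Kpyth (IntermediateField.adjoin Kpyth s) :=
      IntermediateField.finiteDimensional_adjoin hint
    rw [hEeq]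
    exact hfd
  · -- purely inseparable
    haveI : ExpChar Kpyth p := ExpChar.prime hp
    rw [isPurelyInseparable_iff_pow_mem Kpyth p]
    intro x
    obtain ⟨n, hn⟩ := key (x : Ω) (hle1 x.2)
    refine ⟨n, ⟨(x : Ω) ^ p ^ n, hn⟩, ?_⟩
    apply Subtype.ext
    push_cast
    rfl
end
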